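/- arXiv:1009.0639 — 4 statements merged into one kernel-verified Lean document; each statement's English description precedes it below -/
import Mathlib

section
/- There exists a dense Gδ subset R of P([0,1]^d) (with the weak topology) such that for every measure μ ∈ R and every x ∈ [0,1]^d one has h_μ(x) ≤ d; equivalently, for every μ ∈ R the level set E_μ(h) is empty for every h > d. -/
open MeasureTheory Metric Filter Set
open scoped ENNReal NNReal Topology

noncomputable section

/-- The unit cube `[0,1]^d` of `ℝ^d` equipped with the supremum metric,
viewed as a (compact) metric space. -/
abbrev Cube (d : ℕ) : Type := ↥(Set.Icc (0 : Fin d → ℝ) 1)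

/-- The local (lower) dimension `h_μ(x) = liminf_{r → 0⁺} log μ(B(x,r)) / log r`. -/
noncomputable def locDim {d : ℕ} (μ : Measure (Cube d)) (x : Cube d) : EReal :=
  Filter.liminf
    (fun r : ℝ => ENNReal.log (μ (Metric.ball x r)) / (Real.log r : EReal))
    (nhdsWithin 0 (Set.Ioi 0))

/-- The level set `E_μ(h) = {x : h_μ(x) = h}`. -/
def levelSet {d : ℕ} (μ : Measure (Cube d)) (h : ℝ) : Set (Cube d) :=
  {x | locDim μ x = (h : EReal)}

/-- The dyadic cube `I_{j,k} = ∏ᵢ [kᵢ 2^{-j}, (kᵢ+1) 2^{-j})`, as a subset of the cube. -/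
def dyadicCube (d j : ℕ) (k : Fin d → Fin (2 ^ j)) : Set (Cube d) :=
  {x | ∀ i, (k i : ℝ) / 2 ^ j ≤ (x : Fin d → ℝ) i ∧ (x : Fin d → ℝ) i < ((k i : ℝ) + 1) / 2 ^ j}

/-- `s_j(q) = Σ_{Q ∈ G_j, μ(Q) ≠ 0} μ(Q)^q`. -/
def dyadicSum {d : ℕ} (μ : Measure (Cube d)) (q : ℝ) (j : ℕ) : ℝ :=
  ∑ k ∈ Finset.univ.filter (fun k : Fin d → Fin (2 ^ j) => μ (dyadicCube d j k) ≠ 0),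
    (μ (dyadicCube d j k)).toReal ^ q

/-- The `L^q`-spectrum `τ_μ(q) = liminf_j -(1/j) log₂ s_j(q)`. -/
def lqSpectrum {d : ℕ} (μ : Measure (Cube d)) (q : ℝ) : EReal :=
  Filter.liminf
    (fun j : ℕ => ((-(1 / (j : ℝ)) * Real.logb 2 (dyadicSum μ q j) : ℝ) : EReal))
    Filter.atTop


namespace TypAux
variable {d : ℕ}
variable {d : ℕ}

def lam (d : ℕ) : Measure (Cube d) := (volume : Measure (Fin d → ℝ)).comap Subtype.val

lemma lam_apply {s : Set (Cube d)} (hs : MeasurableSet s) :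
    lam d s = volume (Subtype.val '' s) :=
  Measure.comap_apply _ Subtype.val_injective
    (fun _ ht => (MeasurableSet.subtype_image measurableSet_Icc ht)) _ hs

instance : IsProbabilityMeasure (lam d) := by
  constructor
  rw [lam_apply MeasurableSet.univ, Subtype.coe_image_univ]
  rw [Real.volume_Icc_pi]
  simp

lemma lam_ball (y : Cube d) {ρ : ℝ} (h0 : 0 < ρ) (h1 : ρ ≤ 1 / 2) :
    ENNReal.ofReal (ρ ^ d) ≤ lam d (ball y ρ) := by
  classical
  set a : Fin d → ℝ := fun i => if (y : Fin d → ℝ) i ≤ 1 / 2 then (y : Fin d → ℝ) i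
    else (y : Fin d → ℝ) i - ρ with ha
  set S : Set (Fin d → ℝ) := univ.pi fun i => Ioo (a i) (a i + ρ) with hS
  have hSmeas : MeasurableSet S := MeasurableSet.univ_pi fun i => measurableSet_Ioo
  have hy0 : ∀ i, 0 ≤ (y : Fin d → ℝ) i := fun i => y.2.1 i
  have hy1 : ∀ i, (y : Fin d → ℝ) i ≤ 1 := fun i => y.2.2 i
  have hsub : Subtype.val ⁻¹' S ⊆ ball y ρ := by
    intro x hx
    simp only [mem_preimage, hS, Set.mem_pi, mem_univ, forall_true_left, mem_Ioo] at hx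
    rw [mem_ball, Subtype.dist_eq, dist_pi_lt_iff h0]
    intro i
    have h := hx i
    rw [Real.dist_eq, abs_lt]
    by_cases hc : (y : Fin d → ℝ) i ≤ 1 / 2 <;> simp only [ha, hc, if_true, if_false] at h <;>
      constructor <;> linarith [h.1, h.2]
  have hSicc : S ⊆ Icc (0 : Fin d → ℝ) 1 := by
    intro x hx
    simp only [hS, Set.mem_pi, mem_univ, forall_true_left, mem_Ioo] at hx
    rw [mem_Icc]
    constructor <;> intro i
    · have h1 := (hx i).1
      simp only [Pi.zero_apply]
      by_cases hc : (y : Fin d → ℝ) i ≤ 1 / 2 <;> simp only [ha, hc, if_true, if_false] at h1 <;>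
        linarith [hy0 i, hy1 i]
    · have h2 := (hx i).2
      simp only [Pi.one_apply]
      by_cases hc : (y : Fin d → ℝ) i ≤ 1 / 2 <;> simp only [ha, hc, if_true, if_false] at h2 <;>
        linarith [hy0 i, hy1 i]
  calc ENNReal.ofReal (ρ ^ d) = volume S := by
        rw [hS, volume_pi_pi]
        simp only [Real.volume_Ioo, add_sub_cancel_left]
        rw [Finset.prod_const, ← ENNReal.ofReal_pow h0.le]
        simp
    _ = lam d (Subtype.val ⁻¹' S) := by
        rw [lam_apply (measurable_subtype_coe hSmeas), Subtype.image_preimage_coe,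
          inter_eq_self_of_subset_right hSicc]
    _ ≤ lam d (ball y ρ) := measure_mono hsub


variable {d : ℕ}


def tm (m : ℕ) : ℝ≥0 := ((m : ℝ≥0) + 2)⁻¹

lemma tm_pos (m : ℕ) : 0 < tm m := by
  rw [tm]; exact inv_pos.2 (by positivity)

lemma tm_le_one (m : ℕ) : tm m ≤ 1 := by
  rw [tm]
  apply inv_le_one_of_one_le₀
  calc (1:ℝ≥0) ≤ 2 := one_le_two
    _ ≤ (m:ℝ≥0) + 2 := le_add_self

def mixn (μ : ProbabilityMeasure (Cube d)) (m : ℕ) : ProbabilityMeasure (Cube d) :=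
  ⟨((1 - tm m : ℝ≥0) : ℝ≥0∞) • μ.toMeasure + ((tm m : ℝ≥0) : ℝ≥0∞) • lam d, by
    constructor
    simp only [Measure.coe_add, Pi.add_apply, Measure.smul_apply, smul_eq_mul]
    rw [measure_univ, measure_univ, mul_one, mul_one, ← ENNReal.coe_add,
      tsub_add_cancel_of_le (tm_le_one m), ENNReal.coe_one]⟩

lemma mixn_ge (μ : ProbabilityMeasure (Cube d)) (m : ℕ) (s : Set (Cube d)) :
    ((tm m : ℝ≥0) : ℝ≥0∞) * lam d s ≤ (mixn μ m).toMeasure s := by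
  simp only [mixn, Measure.coe_add, Pi.add_apply, Measure.smul_apply, smul_eq_mul]
  exact le_add_self

lemma mixn_tendsto (μ : ProbabilityMeasure (Cube d)) :
    Tendsto (mixn μ) atTop (𝓝 μ) := by
  rw [ProbabilityMeasure.tendsto_iff_forall_integral_tendsto]
  intro f
  have key : ∀ m, ∫ ω, f ω ∂((mixn μ m) : Measure (Cube d)) =
      (1 - ((m:ℝ)+2)⁻¹) * ∫ ω, f ω ∂(μ : Measure (Cube d)) +
      ((m:ℝ)+2)⁻¹ * ∫ ω, f ω ∂(lam d) := by
    intro m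
    have h1 : ((mixn μ m) : Measure (Cube d)) =
        ((1 - tm m : ℝ≥0) : ℝ≥0∞) • μ.toMeasure + ((tm m : ℝ≥0) : ℝ≥0∞) • lam d := rfl
    haveI i1 : IsFiniteMeasure (((1 - tm m : ℝ≥0) : ℝ≥0∞) • μ.toMeasure) := by
      constructor
      rw [Measure.smul_apply, smul_eq_mul]
      exact ENNReal.mul_lt_top ENNReal.coe_lt_top (measure_lt_top _ _)
    haveI i2 : IsFiniteMeasure (((tm m : ℝ≥0) : ℝ≥0∞) • lam d) := by
      constructor
      rw [Measure.smul_apply, smul_eq_mul]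
      exact ENNReal.mul_lt_top ENNReal.coe_lt_top (measure_lt_top _ _)
    rw [h1, integral_add_measure (f.integrable _) (f.integrable _),
      integral_smul_measure, integral_smul_measure]
    have e1 : (((1 - tm m : ℝ≥0) : ℝ≥0∞)).toReal = 1 - ((m:ℝ)+2)⁻¹ := by
      rw [ENNReal.coe_toReal, NNReal.coe_sub (tm_le_one m)]
      simp [tm]
    have e2 : (((tm m : ℝ≥0) : ℝ≥0∞)).toReal = ((m:ℝ)+2)⁻¹ := by
      rw [ENNReal.coe_toReal]; simp [tm]
    rw [e1, e2]
    simp [smul_eq_mul]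
  simp only [key]
  have ht : Tendsto (fun m : ℕ => ((m:ℝ)+2)⁻¹) atTop (𝓝 0) := by
    apply Tendsto.inv_tendsto_atTop
    exact tendsto_atTop_add_const_right _ _ tendsto_natCast_atTop_atTop
  have h2 : Tendsto (fun m : ℕ => (1 - ((m:ℝ)+2)⁻¹) * ∫ ω, f ω ∂(μ : Measure (Cube d)) +
      ((m:ℝ)+2)⁻¹ * ∫ ω, f ω ∂(lam d)) atTop
      (𝓝 ((1 - 0) * ∫ ω, f ω ∂(μ : Measure (Cube d)) + 0 * ∫ ω, f ω ∂(lam d))) :=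
    ((tendsto_const_nhds.sub ht).mul tendsto_const_nhds).add (ht.mul tendsto_const_nhds)
  simpa using h2


lemma isOpen_lt_measure {X : Type*} [MetricSpace X] [MeasurableSpace X] [OpensMeasurableSpace X]
    {G : Set X} (hG : IsOpen G) (c : ℝ≥0∞) :
    IsOpen {μ : ProbabilityMeasure X | c < μ.toMeasure G} := by
  rw [isOpen_iff_mem_nhds]
  intro P hP
  have hPG : c < P.toMeasure G := hP
  have hε : 0 < P.toMeasure G - c := tsub_pos_of_lt hPG
  filter_upwards [P.toMeasure_add_pos_gt_mem_nhds hG hε] with Q hQ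
  by_contra h
  push_neg at h
  have h2 : Q.toMeasure G + (P.toMeasure G - c) ≤ c + (P.toMeasure G - c) :=
    add_le_add_left h _
  rw [add_comm c, tsub_add_cancel_of_le hPG.le] at h2
  exact absurd (lt_of_lt_of_le hQ h2) (lt_irrefl _)

lemma tm_def (m : ℕ) : tm m = ((m : ℝ≥0) + 2)⁻¹ := rfl

variable {d : ℕ}

def Oset (d : ℕ) (r s : ℝ) (F : Finset (Cube d)) : Set (ProbabilityMeasure (Cube d)) :=
  {μ | ∀ y ∈ F, ENNReal.ofReal s < μ.toMeasure (ball y (r / 2))}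

def Good (d k n : ℕ) (r s : ℝ) (F : Finset (Cube d)) : Prop :=
  0 < r ∧ r < ((n : ℝ) + 1)⁻¹ ∧ r < 1 ∧ 0 < s ∧ r ^ (k * d + 1) ≤ s ^ k ∧
    ∀ x : Cube d, ∃ y ∈ F, dist x y < r / 2

def Uset (d k n : ℕ) : Set (ProbabilityMeasure (Cube d)) :=
  ⋃ (r : ℝ) (s : ℝ) (F : Finset (Cube d)) (_ : Good d (k + 1) n r s F), Oset d r s F

lemma isOpen_Oset (r s : ℝ) (F : Finset (Cube d)) : IsOpen (Oset d r s F) := by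
  have h : Oset d r s F = ⋂ y ∈ F, {μ : ProbabilityMeasure (Cube d) |
      ENNReal.ofReal s < μ.toMeasure (ball y (r / 2))} := by
    ext μ; simp [Oset]
  rw [h]
  exact isOpen_biInter_finset fun y _ => isOpen_lt_measure isOpen_ball _

lemma isOpen_Uset (k n : ℕ) : IsOpen (Uset d k n) :=
  isOpen_iUnion fun r => isOpen_iUnion fun s => isOpen_iUnion fun F =>
    isOpen_iUnion fun _ => isOpen_Oset r s F

lemma mixn_mem_Uset (μ : ProbabilityMeasure (Cube d)) (m k n : ℕ) :
    mixn μ m ∈ Uset d k n := by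
  set t' : ℝ := ((m : ℝ) + 2)⁻¹ with ht'
  have ht'0 : 0 < t' := by positivity
  set kk : ℕ := k + 1 with hkk
  set c0 : ℝ := (t' / 2) ^ kk / 2 ^ (d * kk) with hc0
  have hc00 : 0 < c0 := by positivity
  set r : ℝ := min c0 (min ((n : ℝ) + 1)⁻¹ 1) / 2 with hr
  have hmin0 : 0 < min c0 (min ((n : ℝ) + 1)⁻¹ 1) := by
    apply lt_min hc00
    apply lt_min (by positivity) one_pos
  have hr0 : 0 < r := by positivity
  have hmin1 : min c0 (min ((n : ℝ) + 1)⁻¹ 1) ≤ c0 := min_le_left _ _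
  have hmin2 : min c0 (min ((n : ℝ) + 1)⁻¹ 1) ≤ ((n : ℝ) + 1)⁻¹ :=
    le_trans (min_le_right _ _) (min_le_left _ _)
  have hmin3 : min c0 (min ((n : ℝ) + 1)⁻¹ 1) ≤ 1 :=
    le_trans (min_le_right _ _) (min_le_right _ _)
  have hrc0 : r ≤ c0 := by rw [hr]; linarith
  have hrn : r < ((n : ℝ) + 1)⁻¹ := by
    have : (0:ℝ) < ((n : ℝ) + 1)⁻¹ := by positivity
    rw [hr]; linarith
  have hr1 : r < 1 := by rw [hr]; linarith
  set s : ℝ := (t' / 2) * (r / 2) ^ d with hs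
  have hs0 : 0 < s := by positivity
  have hrhalf : r ≤ 1 := hr1.le
  clear_value r
  clear hr
  have hexp : s ^ kk = c0 * r ^ (d * kk) := by
    rw [hs, hc0, mul_pow, ← pow_mul, div_pow r (2:ℝ) (d * kk)]
    field_simp
  have hpow : r ^ (kk * d + 1) ≤ s ^ kk := by
    rw [hexp]
    have e : r ^ (kk * d + 1) = r ^ (d * kk) * r := by rw [Nat.mul_comm kk d, pow_succ]
    rw [e]
    calc r ^ (d * kk) * r ≤ r ^ (d * kk) * c0 :=
          mul_le_mul_of_nonneg_left hrc0 (pow_nonneg hr0.le _)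
      _ = c0 * r ^ (d * kk) := mul_comm _ _
  obtain ⟨T, hTsub, hTfin, hTcov⟩ :=
    finite_cover_balls_of_compact (isCompact_univ (X := Cube d)) (half_pos hr0)
  refine mem_iUnion.2 ⟨r, mem_iUnion.2 ⟨s, mem_iUnion.2 ⟨hTfin.toFinset, mem_iUnion.2
    ⟨⟨hr0, hrn, hr1, hs0, hpow, ?_⟩, ?_⟩⟩⟩⟩
  · intro x
    have hx := hTcov (mem_univ x)
    rw [mem_iUnion₂] at hx
    obtain ⟨y, hyT, hxy⟩ := hx
    exact ⟨y, hTfin.mem_toFinset.2 hyT, mem_ball.1 hxy⟩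
  · intro y _
    have hlb := lam_ball y (half_pos hr0) (by linarith)
    have htm : ((tm m : ℝ≥0) : ℝ≥0∞) = ENNReal.ofReal t' := by
      rw [tm_def, ht', ← ENNReal.ofReal_coe_nnreal]
      congr 1
    calc ENNReal.ofReal s < ENNReal.ofReal (t' * (r / 2) ^ d) := by
          rw [ENNReal.ofReal_lt_ofReal_iff (by positivity)]
          rw [hs]
          have : (0:ℝ) < (r / 2) ^ d := by positivity
          nlinarith
      _ = ((tm m : ℝ≥0) : ℝ≥0∞) * ENNReal.ofReal ((r / 2) ^ d) := by
          rw [htm, ← ENNReal.ofReal_mul ht'0.le]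
      _ ≤ ((tm m : ℝ≥0) : ℝ≥0∞) * lam d (ball y (r / 2)) := by
          exact mul_le_mul_right hlb _
      _ ≤ (mixn μ m).toMeasure (ball y (r / 2)) := mixn_ge μ m _

lemma locDim_le_of_mem (μ : ProbabilityMeasure (Cube d))
    (hμ : ∀ k n : ℕ, μ ∈ Uset d k n) (x : Cube d) :
    locDim (μ : Measure (Cube d)) x ≤ ((d : ℝ) : EReal) := by
  have key : ∀ k : ℕ, locDim (μ : Measure (Cube d)) x ≤
      (((d : ℝ) + ((k : ℝ) + 1)⁻¹ : ℝ) : EReal) := by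
    intro k
    apply liminf_le_of_frequently_le'
    rw [(nhdsGT_basis (0 : ℝ)).frequently_iff]
    intro ε hε
    obtain ⟨n, hn⟩ := exists_nat_one_div_lt hε
    have hmem := hμ k n
    simp only [Uset, mem_iUnion] at hmem
    obtain ⟨r, s, F, hg, hO⟩ := hmem
    obtain ⟨hr0, hrn, hr1, hs0, hpow, hcov⟩ := hg
    refine ⟨r, ⟨hr0, ?_⟩, ?_⟩
    · rw [one_div] at hn
      calc r < ((n : ℝ) + 1)⁻¹ := hrn
        _ < ε := hn
    · -- the pointwise bound
      obtain ⟨y, hyF, hxy⟩ := hcov x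
      have hball : ball y (r / 2) ⊆ ball x r := by
        intro z hz
        rw [mem_ball] at hz ⊢
        have h1 : dist z x ≤ dist z y + dist y x := dist_triangle z y x
        have h2 : dist y x < r / 2 := by rw [dist_comm]; exact hxy
        linarith
      have hM : ENNReal.ofReal s < (μ : Measure (Cube d)) (ball x r) :=
        lt_of_lt_of_le (hO y hyF) (measure_mono hball)
      set M : ℝ≥0∞ := (μ : Measure (Cube d)) (ball x r) with hMdef
      have hMtop : M ≠ ⊤ := (measure_lt_top _ _).ne
      have hMpos : 0 < M.toReal := by
        rw [ENNReal.toReal_pos_iff]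
        exact ⟨lt_of_le_of_lt zero_le hM, hMtop.lt_top⟩
      have hsM : s < M.toReal := by
        have := (ENNReal.toReal_lt_toReal ENNReal.ofReal_ne_top hMtop).2 hM
        rwa [ENNReal.toReal_ofReal hs0.le] at this
      have hlogr : Real.log r < 0 := Real.log_neg hr0 hr1
      rw [ENNReal.log_pos_real' hMpos, ← EReal.coe_div, EReal.coe_le_coe_iff]
      have hlogm : ((k : ℝ) + 1) * Real.log M.toReal ≥
          (((k + 1) * d + 1 : ℕ) : ℝ) * Real.log r := by
        have l1 : Real.log s ≤ Real.log M.toReal :=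
          (Real.log_le_log_iff hs0 (by linarith)).2 hsM.le
        have l2 : Real.log (r ^ ((k + 1) * d + 1)) ≤ Real.log (s ^ (k + 1)) :=
          (Real.log_le_log_iff (pow_pos hr0 _) (pow_pos hs0 _)).2 hpow
        rw [Real.log_pow, Real.log_pow] at l2
        have hc : ((k + 1 : ℕ) : ℝ) = (k : ℝ) + 1 := by push_cast; ring
        rw [hc] at l2
        nlinarith [l1, l2]
      have hkk : (0 : ℝ) < (k : ℝ) + 1 := by positivity
      rw [div_le_iff_of_neg hlogr]
      rw [← mul_le_mul_iff_right₀ hkk]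
      have e1 : ((k : ℝ) + 1) * ((d : ℝ) + ((k : ℝ) + 1)⁻¹) = ((k : ℝ) + 1) * (d : ℝ) + 1 := by
        rw [mul_add, mul_inv_cancel₀ hkk.ne']
      have e2 : (((k + 1) * d + 1 : ℕ) : ℝ) = ((k : ℝ) + 1) * (d : ℝ) + 1 := by
        push_cast; ring
      calc ((k : ℝ) + 1) * (((d : ℝ) + ((k : ℝ) + 1)⁻¹) * Real.log r)
          = (((k + 1) * d + 1 : ℕ) : ℝ) * Real.log r := by
            rw [← mul_assoc, e1, e2]
            try ring
        _ ≤ ((k : ℝ) + 1) * Real.log M.toReal := hlogm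
  have hlim : Tendsto (fun k : ℕ => (((d : ℝ) + ((k : ℝ) + 1)⁻¹ : ℝ) : EReal)) atTop
      (𝓝 (((d : ℝ) : EReal))) := by
    rw [EReal.tendsto_coe]
    have h0 : Tendsto (fun k : ℕ => ((k : ℝ) + 1)⁻¹) atTop (𝓝 0) := by
      apply Tendsto.inv_tendsto_atTop
      exact tendsto_atTop_add_const_right _ _ tendsto_natCast_atTop_atTop
    simpa using tendsto_const_nhds.add h0
  exact ge_of_tendsto' hlim key

end TypAux

/-- There is a dense `Gδ` set `R` of probability measures on `[0,1]^d`
(with the weak topology) such that every `μ ∈ R` has all its local dimensions `≤ d`;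
equivalently, `E_μ(h) = ∅` for every `h > d`. -/
theorem typical_measures_locDim_le_d (d : ℕ) (hd : 1 ≤ d) :
    ∃ R : Set (ProbabilityMeasure (Cube d)), IsGδ R ∧ Dense R ∧
      ∀ μ ∈ R,
        (∀ x : Cube d, locDim (μ : Measure (Cube d)) x ≤ ((d : ℝ) : EReal)) ∧
        (∀ h : ℝ, (d : ℝ) < h → levelSet (μ : Measure (Cube d)) h = ∅) := by
  refine ⟨⋂ (k : ℕ), ⋂ (n : ℕ), TypAux.Uset d k n, ?_, ?_, ?_⟩
  · exact IsGδ.iInter fun k => IsGδ.iInter_of_isOpen fun n => TypAux.isOpen_Uset k n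
  · rw [dense_iff_inter_open]
    rintro V hV ⟨μ, hμV⟩
    have hev : ∀ᶠ m in atTop, TypAux.mixn μ m ∈ V :=
      (TypAux.mixn_tendsto μ).eventually_mem (hV.mem_nhds hμV)
    obtain ⟨m, hm⟩ := hev.exists
    exact ⟨TypAux.mixn μ m, hm, mem_iInter.2 fun k => mem_iInter.2 fun n =>
      TypAux.mixn_mem_Uset μ m k n⟩
  · intro μ hμ
    have hU : ∀ k n : ℕ, μ ∈ TypAux.Uset d k n := fun k n =>
      mem_iInter.1 (mem_iInter.1 hμ k) n
    have h1 : ∀ x : Cube d, locDim (μ : Measure (Cube d)) x ≤ ((d : ℝ) : EReal) :=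
      fun x => TypAux.locDim_le_of_mem μ hU x
    refine ⟨h1, ?_⟩
    intro h hh
    rw [eq_empty_iff_forall_notMem]
    intro x hx
    rw [levelSet, mem_setOf_eq] at hx
    have h2 := h1 x
    rw [hx, EReal.coe_le_coe_iff] at h2
    linarith
end
end

section
/- There exists a dense Gδ subset R of P([0,1]^d) (with the weak topology) such that every measure μ ∈ R satisfies τ_μ(q) = d(q − 1) for every q ∈ [0,1]. -/
open MeasureTheory Metric Filter Set
open scoped ENNReal NNReal Topology

noncomputable section

/-! ### Auxiliary definitions -/

def openCube (d j : ℕ) (k : Fin d → Fin (2 ^ j)) : Set (Cube d) :=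
  {x | ∀ i, (k i : ℝ) / 2 ^ j < (x : Fin d → ℝ) i ∧ (x : Fin d → ℝ) i < ((k i : ℝ) + 1) / 2 ^ j}

lemma openCube_subset (d j : ℕ) (k : Fin d → Fin (2 ^ j)) :
    openCube d j k ⊆ dyadicCube d j k :=
  fun x hx i => ⟨(hx i).1.le, (hx i).2⟩

lemma continuous_coord (d : ℕ) (i : Fin d) :
    Continuous (fun x : Cube d => (x : Fin d → ℝ) i) :=
  (continuous_apply i).comp continuous_subtype_val

lemma isOpen_openCube (d j : ℕ) (k : Fin d → Fin (2 ^ j)) : IsOpen (openCube d j k) := by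
  have : openCube d j k = ⋂ i, (fun x : Cube d => (x : Fin d → ℝ) i) ⁻¹'
      (Set.Ioo ((k i : ℝ) / 2 ^ j) (((k i : ℝ) + 1) / 2 ^ j)) := by
    ext x; simp [openCube, Set.mem_iInter, Set.mem_Ioo, forall_and]
  rw [this]
  exact isOpen_iInter_of_finite fun i => (isOpen_Ioo).preimage (continuous_coord d i)

lemma measurableSet_dyadicCube (d j : ℕ) (k : Fin d → Fin (2 ^ j)) :
    MeasurableSet (dyadicCube d j k) := by
  have : dyadicCube d j k = ⋂ i, (fun x : Cube d => (x : Fin d → ℝ) i) ⁻¹'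
      (Set.Ico ((k i : ℝ) / 2 ^ j) (((k i : ℝ) + 1) / 2 ^ j)) := by
    ext x; simp [dyadicCube, Set.mem_iInter, Set.mem_Ico, forall_and]
  rw [this]
  exact MeasurableSet.iInter fun i =>
    (measurableSet_Ico).preimage (continuous_coord d i).measurable

lemma aux_le {j a b : ℕ} {t : ℝ} (h1 : (a : ℝ) / 2 ^ j ≤ t) (h2 : t < ((b : ℝ) + 1) / 2 ^ j) :
    a ≤ b := by
  have hp : (0:ℝ) < 2 ^ j := by positivity
  have : (a : ℝ) < (b : ℝ) + 1 := by
    have := h1.trans_lt h2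
    rwa [div_lt_div_iff_of_pos_right hp] at this
  exact_mod_cast Nat.lt_succ_iff.mp (by exact_mod_cast this)

lemma dyadicCube_disjoint (d j : ℕ) : ∀ k k' : Fin d → Fin (2 ^ j), k ≠ k' →
    Disjoint (dyadicCube d j k) (dyadicCube d j k') := by
  intro k k' hne
  rw [Set.disjoint_left]
  intro x hx hx'
  apply hne
  funext i
  exact Fin.ext (le_antisymm (aux_le (hx i).1 (hx' i).2) (aux_le (hx' i).1 (hx i).2))

/-! ### The uniform measure -/

def unifM (d : ℕ) : Measure (Cube d) := Measure.comap Subtype.val volume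

lemma cube_measurableEmbedding (d : ℕ) :
    MeasurableEmbedding (Subtype.val : Cube d → (Fin d → ℝ)) :=
  MeasurableEmbedding.subtype_coe measurableSet_Icc

lemma unifM_apply (d : ℕ) (s : Set (Cube d)) (hs : MeasurableSet s) :
    unifM d s = volume (Subtype.val '' s) :=
  Measure.comap_apply _ Subtype.val_injective
    (fun t ht => (cube_measurableEmbedding d).measurableSet_image' ht) _ hs

instance (d : ℕ) : IsProbabilityMeasure (unifM d) := by
  constructor
  rw [unifM_apply d univ MeasurableSet.univ, Subtype.coe_image_univ]
  rw [Real.volume_Icc_pi]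
  simp

lemma image_openCube (d j : ℕ) (k : Fin d → Fin (2 ^ j)) :
    Subtype.val '' openCube d j k =
      Set.pi Set.univ (fun i => Set.Ioo ((k i : ℝ) / 2 ^ j) (((k i : ℝ) + 1) / 2 ^ j)) := by
  ext y
  constructor
  · rintro ⟨x, hx, rfl⟩
    intro i _
    exact hx i
  · intro hy
    have hy' : y ∈ Set.Icc (0 : Fin d → ℝ) 1 := by
      constructor <;> intro i
      · have := (hy i (Set.mem_univ i)).1
        have h0 : (0:ℝ) ≤ (k i : ℝ) / 2 ^ j := by positivity
        exact le_of_lt (h0.trans_lt this)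
      · have := (hy i (Set.mem_univ i)).2
        have hk : ((k i : ℝ) + 1) / 2 ^ j ≤ 1 := by
          rw [div_le_one (by positivity)]
          have : (k i : ℕ) + 1 ≤ 2 ^ j := (k i).2
          exact_mod_cast this
        exact le_of_lt (this.trans_le hk)
    exact ⟨⟨y, hy'⟩, fun i => hy i (Set.mem_univ i), rfl⟩

lemma unifM_openCube (d j : ℕ) (k : Fin d → Fin (2 ^ j)) :
    unifM d (openCube d j k) = ENNReal.ofReal ((2 ^ j : ℝ)⁻¹) ^ d := by
  rw [unifM_apply d _ (isOpen_openCube d j k).measurableSet, image_openCube,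
    Real.volume_pi_Ioo]
  have : ∀ i : Fin d, ENNReal.ofReal (((k i : ℝ) + 1) / 2 ^ j - (k i : ℝ) / 2 ^ j)
      = ENNReal.ofReal ((2 ^ j : ℝ)⁻¹) := by
    intro i; congr 1; field_simp; ring
  rw [Finset.prod_congr rfl (fun i _ => this i), Finset.prod_const]
  simp

/-! ### Hölder-type inequality -/

lemma sum_rpow_le {ι : Type*} (S : Finset ι) (a : ι → ℝ) (ha : ∀ i ∈ S, 0 ≤ a i)
    {q : ℝ} (hq : 0 < q) (hq1 : q ≤ 1) (hsum : ∑ i ∈ S, a i ≤ 1) :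
    ∑ i ∈ S, a i ^ q ≤ (S.card : ℝ) ^ (1 - q) := by
  rcases S.eq_empty_or_nonempty with rfl | hS
  · simp; positivity
  have hN : (0:ℝ) < S.card := by exact_mod_cast Finset.card_pos.mpr hS
  have key := Real.arith_mean_le_rpow_mean S (fun _ => (S.card : ℝ)⁻¹)
    (fun i => a i ^ q) (fun i _ => by positivity)
    (by rw [Finset.sum_const, nsmul_eq_mul]; field_simp)
    (fun i hi => Real.rpow_nonneg (ha i hi) q) (p := 1/q)
    (by rw [le_div_iff₀ hq]; linarith)
  simp only [one_div_one_div] at key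
  have hzp : ∀ i ∈ S, (a i ^ q) ^ (1/q : ℝ) = a i := by
    intro i hi
    rw [← Real.rpow_mul (ha i hi), mul_one_div, div_self hq.ne', Real.rpow_one]
  have e1 : ∑ x ∈ S, (S.card:ℝ)⁻¹ * (a x ^ q) ^ (1/q : ℝ) = (S.card:ℝ)⁻¹ * ∑ x ∈ S, a x := by
    rw [← Finset.mul_sum]; congr 1; exact Finset.sum_congr rfl hzp
  rw [e1, ← Finset.mul_sum] at key
  have h2 : ((S.card : ℝ)⁻¹ * ∑ i ∈ S, a i) ^ (q:ℝ) ≤ ((S.card : ℝ)⁻¹) ^ (q:ℝ) := by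
    apply Real.rpow_le_rpow (mul_nonneg (by positivity) (Finset.sum_nonneg ha)) _ hq.le
    calc (S.card : ℝ)⁻¹ * ∑ i ∈ S, a i ≤ (S.card : ℝ)⁻¹ * 1 := by
          apply mul_le_mul_of_nonneg_left hsum (by positivity)
      _ = (S.card : ℝ)⁻¹ := mul_one _
  have h3 : (S.card : ℝ)⁻¹ * ∑ i ∈ S, a i ^ q ≤ ((S.card : ℝ)⁻¹) ^ (q:ℝ) := key.trans h2
  calc ∑ i ∈ S, a i ^ q = (S.card : ℝ) * ((S.card : ℝ)⁻¹ * ∑ i ∈ S, a i ^ q) := by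
        field_simp
    _ ≤ (S.card : ℝ) * ((S.card : ℝ)⁻¹) ^ (q:ℝ) := by
        apply mul_le_mul_of_nonneg_left h3 hN.le
    _ = (S.card : ℝ) ^ (1 - q) := by
        rw [Real.inv_rpow hN.le, Real.rpow_sub hN, Real.rpow_one, div_eq_mul_inv]

/-! ### Lower bound, valid for every probability measure -/

lemma sum_toReal_le {d : ℕ} (μ : Measure (Cube d)) [IsProbabilityMeasure μ] (j : ℕ)
    (S : Finset (Fin d → Fin (2 ^ j))) :
    ∑ k ∈ S, (μ (dyadicCube d j k)).toReal ≤ 1 := by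
  have h1 : ∑ k ∈ S, μ (dyadicCube d j k) ≤ 1 := by
    rw [← measure_biUnion_finset ?_ (fun k _ => measurableSet_dyadicCube d j k)]
    · exact prob_le_one
    · intro k _ k' _ hkk'
      exact dyadicCube_disjoint d j k k' hkk'
  have h2 : (∑ k ∈ S, μ (dyadicCube d j k)).toReal ≤ 1 := by
    have := ENNReal.toReal_mono (by simp) h1
    simpa using this
  rwa [ENNReal.toReal_sum (fun k _ => (measure_lt_top μ _).ne)] at h2

lemma card_le {d j : ℕ} (S : Finset (Fin d → Fin (2 ^ j))) :
    (S.card : ℝ) ≤ (2:ℝ) ^ ((j * d : ℕ) : ℝ) := by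
  have h1 : S.card ≤ Fintype.card (Fin d → Fin (2 ^ j)) := Finset.card_le_univ S
  have h2 : Fintype.card (Fin d → Fin (2 ^ j)) = 2 ^ (j * d) := by
    simp [Fintype.card_fun, ← pow_mul, mul_comm]
  rw [Real.rpow_natCast]
  exact_mod_cast h1.trans_eq h2

lemma dyadicSum_le {d : ℕ} (μ : Measure (Cube d)) [IsProbabilityMeasure μ] {q : ℝ}
    (hq0 : 0 ≤ q) (hq1 : q ≤ 1) (j : ℕ) :
    dyadicSum μ q j ≤ (2:ℝ) ^ (((j * d : ℕ) : ℝ) * (1 - q)) := by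
  set S := Finset.univ.filter (fun k : Fin d → Fin (2 ^ j) => μ (dyadicCube d j k) ≠ 0)
  rcases eq_or_lt_of_le hq0 with rfl | hq
  · have : dyadicSum μ 0 j = S.card := by
      simp [dyadicSum, Real.rpow_zero, S]
    rw [this]
    simpa using card_le S
  · have key := sum_rpow_le S (fun k => (μ (dyadicCube d j k)).toReal)
      (fun k _ => ENNReal.toReal_nonneg) hq hq1 (sum_toReal_le μ j S)
    refine key.trans ?_
    have := Real.rpow_le_rpow (by positivity) (card_le S) (by linarith : (0:ℝ) ≤ 1 - q)
    refine this.trans_eq ?_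
    rw [← Real.rpow_mul (by norm_num)]

lemma dyadicSum_nonneg {d : ℕ} (μ : Measure (Cube d)) (q : ℝ) (j : ℕ) :
    0 ≤ dyadicSum μ q j :=
  Finset.sum_nonneg fun _ _ => Real.rpow_nonneg ENNReal.toReal_nonneg q

lemma term_ge {d : ℕ} (μ : Measure (Cube d)) [IsProbabilityMeasure μ] {q : ℝ}
    (hq0 : 0 ≤ q) (hq1 : q ≤ 1) (j : ℕ) :
    (d : ℝ) * (q - 1) ≤ -(1 / (j : ℝ)) * Real.logb 2 (dyadicSum μ q j) := by
  have hd0 : (0:ℝ) ≤ d := Nat.cast_nonneg d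
  have hle0 : (d : ℝ) * (q - 1) ≤ 0 := by nlinarith
  rcases Nat.eq_zero_or_pos j with rfl | hj
  · simpa using hle0
  rcases eq_or_lt_of_le (dyadicSum_nonneg μ q j) with h0 | hpos
  · rw [← h0, Real.logb_zero, mul_zero]; exact hle0
  have hjR : (0:ℝ) < j := by exact_mod_cast hj
  have hlog : Real.logb 2 (dyadicSum μ q j) ≤ ((j * d : ℕ) : ℝ) * (1 - q) :=
    (Real.logb_le_iff_le_rpow one_lt_two hpos).mpr (dyadicSum_le μ hq0 hq1 j)
  have hneg : -(1 / (j:ℝ)) ≤ 0 := by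
    rw [neg_nonpos]; positivity
  have h2 := mul_le_mul_of_nonpos_left hlog hneg
  refine le_trans (le_of_eq ?_) h2
  push_cast
  field_simp
  ring

/-! ### Upper bound under the largeness condition -/

def thrExp (d j n : ℕ) : ℝ := -((j * d : ℕ) : ℝ) - (j : ℝ) / ((n : ℝ) + 1)

lemma term_le {d : ℕ} (μ : Measure (Cube d)) [IsProbabilityMeasure μ] {q : ℝ}
    (hq0 : 0 ≤ q) (hq1 : q ≤ 1) {j n : ℕ} (hj : 1 ≤ j)
    (hμ : ∀ k : Fin d → Fin (2 ^ j),
      ENNReal.ofReal ((2:ℝ) ^ thrExp d j n) < μ (openCube d j k)) :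
    -(1 / (j : ℝ)) * Real.logb 2 (dyadicSum μ q j) ≤
      (d : ℝ) * (q - 1) + 1 / ((n : ℝ) + 1) := by
  have hjR : (0:ℝ) < j := by exact_mod_cast hj
  set e : ℝ := thrExp d j n with he
  have h2e : (0:ℝ) < (2:ℝ) ^ e := Real.rpow_pos_of_pos two_pos e
  have hcube : ∀ k : Fin d → Fin (2 ^ j), (2:ℝ) ^ e ≤ (μ (dyadicCube d j k)).toReal := by
    intro k
    have h1 : ENNReal.ofReal ((2:ℝ) ^ e) < μ (dyadicCube d j k) :=
      (hμ k).trans_le (measure_mono (openCube_subset d j k))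
    exact ((ENNReal.ofReal_lt_iff_lt_toReal h2e.le (measure_ne_top μ _)).mp h1).le
  have hne : ∀ k : Fin d → Fin (2 ^ j), μ (dyadicCube d j k) ≠ 0 := by
    intro k
    refine fun h => absurd (hμ k) ?_
    have : μ (openCube d j k) = 0 :=
      le_antisymm (h ▸ measure_mono (openCube_subset d j k)) zero_le
    simp [this]
  have hfilter : Finset.univ.filter
      (fun k : Fin d → Fin (2 ^ j) => μ (dyadicCube d j k) ≠ 0) = Finset.univ := by
    apply Finset.filter_true_of_mem; exact fun k _ => hne k
  have hcard : ((Finset.univ : Finset (Fin d → Fin (2 ^ j))).card : ℝ)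
      = (2:ℝ) ^ ((j * d : ℕ) : ℝ) := by
    rw [Real.rpow_natCast, Finset.card_univ]
    simp [Fintype.card_fun, ← pow_mul, mul_comm]
  have hsum : (2:ℝ) ^ (((j * d : ℕ) : ℝ) + e * q) ≤ dyadicSum μ q j := by
    rw [dyadicSum, hfilter]
    have hterm : ∀ k : Fin d → Fin (2 ^ j), (2:ℝ) ^ (e * q) ≤
        (μ (dyadicCube d j k)).toReal ^ q := by
      intro k
      rw [Real.rpow_mul (by norm_num : (0:ℝ) ≤ 2)]
      exact Real.rpow_le_rpow h2e.le (hcube k) hq0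
    calc (2:ℝ) ^ (((j * d : ℕ) : ℝ) + e * q)
        = ((Finset.univ : Finset (Fin d → Fin (2 ^ j))).card : ℝ) * (2:ℝ) ^ (e * q) := by
          rw [Real.rpow_add two_pos, hcard]
      _ = ∑ _k : Fin d → Fin (2 ^ j), (2:ℝ) ^ (e * q) := by
          rw [Finset.sum_const, nsmul_eq_mul]
      _ ≤ ∑ k : Fin d → Fin (2 ^ j), (μ (dyadicCube d j k)).toReal ^ q :=
          Finset.sum_le_sum fun k _ => hterm k
  have hpos : 0 < dyadicSum μ q j := lt_of_lt_of_le (Real.rpow_pos_of_pos two_pos _) hsum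
  have hlog : ((j * d : ℕ) : ℝ) + e * q ≤ Real.logb 2 (dyadicSum μ q j) :=
    (Real.le_logb_iff_rpow_le one_lt_two hpos).mpr hsum
  have hneg : -(1 / (j:ℝ)) ≤ 0 := by rw [neg_nonpos]; positivity
  have h2 := mul_le_mul_of_nonpos_left hlog hneg
  refine h2.trans ?_
  have heq : -(1 / (j:ℝ)) * (((j * d : ℕ) : ℝ) + e * q)
      = (d : ℝ) * (q - 1) + q / ((n : ℝ) + 1) := by
    rw [he, thrExp]
    push_cast
    have hn1 : ((n:ℝ) + 1) ≠ 0 := by positivity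
    field_simp
    ring
  rw [heq]
  have : q / ((n : ℝ) + 1) ≤ 1 / ((n : ℝ) + 1) := by
    apply div_le_div_of_nonneg_right hq1
    positivity
  linarith

/-! ### The open sets -/

def Uset (d n : ℕ) : Set (ProbabilityMeasure (Cube d)) :=
  {μ | ∃ j, n + 1 ≤ j ∧ ∀ k : Fin d → Fin (2 ^ j),
    ENNReal.ofReal ((2:ℝ) ^ thrExp d j n) < (μ : Measure (Cube d)) (openCube d j k)}

lemma isOpen_measure_gt {d : ℕ} {G : Set (Cube d)} (hG : IsOpen G) (c : ℝ≥0∞) :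
    IsOpen {μ : ProbabilityMeasure (Cube d) | c < (μ : Measure (Cube d)) G} := by
  rw [isOpen_iff_mem_nhds]
  intro μ hμ
  have h := ProbabilityMeasure.le_liminf_measure_open_of_tendsto
    (μ := μ) (μs := id) (L := 𝓝 μ) tendsto_id hG
  exact eventually_lt_of_lt_liminf (lt_of_lt_of_le hμ h)

lemma isOpen_Uset (d n : ℕ) : IsOpen (Uset d n) := by
  have : Uset d n = ⋃ j, ⋃ (_ : n + 1 ≤ j), ⋂ k : Fin d → Fin (2 ^ j),
      {μ : ProbabilityMeasure (Cube d) |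
        ENNReal.ofReal ((2:ℝ) ^ thrExp d j n) < (μ : Measure (Cube d)) (openCube d j k)} := by
    ext μ; simp [Uset, Set.mem_iUnion, Set.mem_iInter]
  rw [this]
  exact isOpen_iUnion fun j => isOpen_iUnion fun _ =>
    isOpen_iInter_of_finite fun k => isOpen_measure_gt (isOpen_openCube d j k) _


/-! ### Mixtures with the uniform measure -/

def mixC (m : ℕ) : ℝ≥0∞ := ENNReal.ofReal (1 / ((m:ℝ) + 2))

lemma mixC_le_one (m : ℕ) : mixC m ≤ 1 := by
  rw [mixC]
  apply ENNReal.ofReal_le_one.mpr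
  rw [div_le_one (by positivity)]
  linarith [Nat.cast_nonneg (α := ℝ) m]

def mixM {d : ℕ} (μ : ProbabilityMeasure (Cube d)) (m : ℕ) : Measure (Cube d) :=
  (1 - mixC m) • (μ : Measure (Cube d)) + mixC m • unifM d

instance {d : ℕ} (μ : ProbabilityMeasure (Cube d)) (m : ℕ) :
    IsProbabilityMeasure (mixM μ m) := by
  constructor
  rw [mixM]
  simp only [Measure.add_apply, Measure.smul_apply, smul_eq_mul]
  rw [measure_univ, measure_univ, mul_one, mul_one]
  exact tsub_add_cancel_of_le (mixC_le_one m)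

def mixP {d : ℕ} (μ : ProbabilityMeasure (Cube d)) (m : ℕ) : ProbabilityMeasure (Cube d) :=
  ⟨mixM μ m, inferInstance⟩

lemma mixM_ge {d : ℕ} (μ : ProbabilityMeasure (Cube d)) (m : ℕ) (s : Set (Cube d)) :
    mixC m * unifM d s ≤ mixM μ m s := by
  rw [mixM]
  simp only [Measure.add_apply, Measure.smul_apply, smul_eq_mul]
  exact le_add_self

lemma mixP_tendsto {d : ℕ} (μ : ProbabilityMeasure (Cube d)) :
    Tendsto (fun m => mixP μ m) atTop (𝓝 μ) := by
  rw [ProbabilityMeasure.tendsto_iff_forall_integral_tendsto]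
  intro f
  have key : ∀ m : ℕ, ∫ ω, f ω ∂(mixP μ m : Measure (Cube d)) =
      (1 - 1 / ((m:ℝ) + 2)) * ∫ ω, f ω ∂(μ : Measure (Cube d))
        + (1 / ((m:ℝ) + 2)) * ∫ ω, f ω ∂(unifM d) := by
    intro m
    have h1 : (mixP μ m : Measure (Cube d)) = (1 - mixC m) • (μ : Measure (Cube d))
        + mixC m • unifM d := rfl
    rw [h1, integral_add_measure, integral_smul_measure, integral_smul_measure]
    · have hc : (mixC m).toReal = 1 / ((m:ℝ) + 2) := by
        rw [mixC, ENNReal.toReal_ofReal (by positivity)]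
      have hc' : (1 - mixC m).toReal = 1 - 1 / ((m:ℝ) + 2) := by
        rw [ENNReal.toReal_sub_of_le (mixC_le_one m) (by simp), ENNReal.toReal_one, hc]
      rw [hc, hc']
      simp [smul_eq_mul]
    · exact (f.integrable _).smul_measure (ENNReal.sub_ne_top (by simp))
    · exact (f.integrable _).smul_measure (by simp [mixC])
  simp only [key]
  have hlim : Tendsto (fun m : ℕ => 1 / ((m:ℝ) + 2)) atTop (𝓝 0) := by
    apply tendsto_one_div_add_atTop_nhds_zero_nat.comp (tendsto_add_atTop_nat 1) |>.congr
    intro m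
    simp [Function.comp]
    ring_nf
  have h1 : Tendsto (fun m : ℕ => (1 - 1 / ((m:ℝ) + 2))) atTop (𝓝 1) := by
    simpa using tendsto_const_nhds.sub hlim
  have := (h1.mul (tendsto_const_nhds (x := ∫ ω, f ω ∂(μ : Measure (Cube d))))).add
    (hlim.mul (tendsto_const_nhds (x := ∫ ω, f ω ∂(unifM d))))
  simpa using this

lemma mixP_mem_Uset {d : ℕ} (μ : ProbabilityMeasure (Cube d)) (m n : ℕ) :
    mixP μ m ∈ Uset d n := by
  refine ⟨(n+1)*(m+2), ?_, ?_⟩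
  · calc n + 1 = (n+1) * 1 := (mul_one _).symm
      _ ≤ (n+1)*(m+2) := Nat.mul_le_mul_left _ (by omega)
  · intro k
    refine lt_of_lt_of_le ?_ (mixM_ge μ m _)
    rw [unifM_openCube]
    have hofreal : mixC m * ENNReal.ofReal (((2:ℝ) ^ ((n+1)*(m+2)))⁻¹) ^ d
        = ENNReal.ofReal ((1/((m:ℝ)+2)) * (((2:ℝ) ^ ((n+1)*(m+2)))⁻¹) ^ d) := by
      rw [mixC, ← ENNReal.ofReal_pow (by positivity), ← ENNReal.ofReal_mul (by positivity)]
    rw [hofreal]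
    apply (ENNReal.ofReal_lt_ofReal_iff (by positivity)).mpr
    -- the real inequality
    set j : ℕ := (n+1)*(m+2) with hj
    set J : ℕ := j * d with hJ
    have hpow : (((2:ℝ) ^ j)⁻¹) ^ d = (2:ℝ) ^ (-(J:ℝ)) := by
      rw [Real.rpow_neg (by norm_num), Real.rpow_natCast, ← inv_pow, ← pow_mul, inv_pow, hJ]
    have hsplit : (2:ℝ) ^ thrExp d j n = (2:ℝ) ^ (-(J:ℝ)) * (2:ℝ) ^ (-((j:ℝ)/((n:ℝ)+1))) := by
      rw [thrExp, sub_eq_add_neg, Real.rpow_add two_pos]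
    have hdiv : (j:ℝ) / ((n:ℝ)+1) = (m:ℝ) + 2 := by
      have : (j:ℝ) = ((n:ℝ)+1) * ((m:ℝ)+2) := by rw [hj]; push_cast; ring
      rw [this]; field_simp
    have hkey : (2:ℝ) ^ (-((m:ℝ)+2)) < 1 / ((m:ℝ)+2) := by
      have h1 : (2:ℝ) ^ (-((m:ℝ)+2)) = ((2:ℝ) ^ (m+2:ℕ))⁻¹ := by
        rw [Real.rpow_neg (by norm_num)]
        congr 1
        rw [← Real.rpow_natCast]
        congr 1
        push_cast; ring
      have h2 : ((m:ℝ)+2) < (2:ℝ) ^ (m+2:ℕ) := by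
        have := Nat.lt_two_pow_self (n := m+2)
        exact_mod_cast this
      rw [h1, one_div]
      exact inv_strictAnti₀ (by positivity) h2
    rw [hpow, hsplit, hdiv, mul_comm]
    exact mul_lt_mul_of_pos_right hkey (Real.rpow_pos_of_pos two_pos _)

/-! ### Main theorem -/

/-- There is a dense `Gδ` set `R` of probability measures on `[0,1]^d`
(with the weak topology) such that every `μ ∈ R` satisfies `τ_μ(q) = d(q-1)` for all
`q ∈ [0,1]`. -/
theorem typical_measures_lq_spectrum (d : ℕ) (hd : 1 ≤ d) :
    ∃ R : Set (ProbabilityMeasure (Cube d)), IsGδ R ∧ Dense R ∧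
      ∀ μ ∈ R, ∀ q ∈ Set.Icc (0 : ℝ) 1,
        lqSpectrum (μ : Measure (Cube d)) q = (((d : ℝ) * (q - 1) : ℝ) : EReal) := by
  refine ⟨⋂ n, Uset d n, IsGδ.iInter_of_isOpen (fun n => isOpen_Uset d n), ?_, ?_⟩
  · -- density
    intro μ
    apply mem_closure_of_tendsto (mixP_tendsto μ)
    filter_upwards with m
    rw [Set.mem_iInter]
    intro n
    exact mixP_mem_Uset μ m n
  · intro μ hμ q hq
    obtain ⟨hq0, hq1⟩ := hq
    apply le_antisymm
    · -- upper bound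
      set c : ℝ := (d:ℝ) * (q - 1) with hc
      have hfreq : ∀ m : ℕ,
          lqSpectrum (μ : Measure (Cube d)) q ≤ ((c + 1/((m:ℝ)+1) : ℝ) : EReal) := by
        intro m
        refine Filter.liminf_le_of_frequently_le ?_ (by isBoundedDefault)
        rw [Filter.frequently_atTop]
        intro n₀
        obtain ⟨j, hjge, hjk⟩ := (Set.mem_iInter.mp hμ) (max n₀ m)
        refine ⟨j, ?_, ?_⟩
        · omega
        · apply EReal.coe_le_coe_iff.mpr
          have hterm := term_le (μ : Measure (Cube d)) hq0 hq1 (by omega) hjk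
          have hmono : 1 / (((max n₀ m : ℕ):ℝ)+1) ≤ 1 / ((m:ℝ)+1) := by
            apply one_div_le_one_div_of_le (by positivity)
            have : (m:ℝ) ≤ ((max n₀ m : ℕ):ℝ) := by exact_mod_cast Nat.le_max_right n₀ m
            linarith
          calc -(1 / (j : ℝ)) * Real.logb 2 (dyadicSum (μ : Measure (Cube d)) q j)
              ≤ (d:ℝ) * (q-1) + 1 / (((max n₀ m : ℕ):ℝ)+1) := hterm
            _ ≤ c + 1/((m:ℝ)+1) := by rw [hc]; linarith
      have htend : Tendsto (fun m : ℕ => ((c + 1/((m:ℝ)+1) : ℝ) : EReal)) atTop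
          (𝓝 ((c : ℝ) : EReal)) := by
        have hr : Tendsto (fun m : ℕ => c + 1/((m:ℝ)+1)) atTop (𝓝 c) := by
          simpa using tendsto_const_nhds.add (tendsto_one_div_add_atTop_nhds_zero_nat (𝕜 := ℝ))
        exact ((continuous_coe_real_ereal.tendsto c).comp hr)
      exact ge_of_tendsto htend (Filter.Eventually.of_forall hfreq)
    · -- lower bound
      refine Filter.le_liminf_of_le (by isBoundedDefault) ?_
      exact Filter.Eventually.of_forall fun j =>
        EReal.coe_le_coe_iff.mpr (term_ge (μ : Measure (Cube d)) hq0 hq1 j)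
end
end

section
/- For every Borel probability measure μ on [0,1]^d and every h ≥ 0, the set Ẽ_μ(h) = { x ∈ [0,1]^d : h_μ(x) ≤ h } satisfies dim_H Ẽ_μ(h) ≤ min(h,d); in particular dim_H E_μ(h) ≤ min(h,d). -/
open MeasureTheory Metric Filter Set
open scoped ENNReal NNReal Topology

noncomputable section

lemma good_radius {d : ℕ} (μ : Measure (Cube d)) [IsProbabilityMeasure μ] {x : Cube d}
    {h s : ℝ} (hx : locDim μ x ≤ (h : EReal)) (hs : h < s) {δ : ℝ} (hδ0 : 0 < δ) (hδ1 : δ ≤ 1/2) :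
    ∃ ρ : ℝ, 0 < ρ ∧ ρ < δ ∧ ENNReal.ofReal (ρ ^ s) ≤ μ (Metric.ball x ρ) := by
  have hfreq : ∃ᶠ r in nhdsWithin (0:ℝ) (Set.Ioi 0),
      ENNReal.log (μ (Metric.ball x r)) / (Real.log r : EReal) < (s : EReal) := by
    exact Filter.frequently_lt_of_liminf_lt (by isBoundedDefault)
      (lt_of_le_of_lt hx (EReal.coe_lt_coe_iff.mpr hs))
  rw [Filter.frequently_iff] at hfreq
  obtain ⟨ρ, hρmem, hρlt⟩ := hfreq (Ioo_mem_nhdsGT_of_mem ⟨le_rfl, hδ0⟩)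
  obtain ⟨hρ0, hρδ⟩ := hρmem
  refine ⟨ρ, hρ0, hρδ, ?_⟩
  have hρ1 : ρ < 1 := lt_of_lt_of_le hρδ (by linarith)
  have hlogρ : Real.log ρ < 0 := Real.log_neg hρ0 hρ1
  set m := μ (Metric.ball x ρ) with hm
  have hmne_top : m ≠ ⊤ := (lt_of_le_of_lt (measure_mono (Set.subset_univ _))
      (by simp [measure_univ])).ne
  have hmne : m ≠ 0 := by
    intro h0
    rw [h0] at hρlt
    rw [ENNReal.log_zero] at hρlt
    have : (⊥ : EReal) / (Real.log ρ : EReal) = ⊤ :=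
      EReal.bot_div_of_neg_ne_bot (by exact_mod_cast hlogρ) (EReal.coe_ne_bot _)
    rw [this] at hρlt
    exact (not_top_lt hρlt)
  have hmtoReal : 0 < m.toReal := ENNReal.toReal_pos hmne hmne_top
  rw [ENNReal.log_pos_real hmne hmne_top] at hρlt
  rw [← EReal.coe_div, EReal.coe_lt_coe_iff] at hρlt
  have : s * Real.log ρ < Real.log m.toReal := (div_lt_iff_of_neg hlogρ).mp hρlt
  have hrs : ρ ^ s < m.toReal := by
    have := Real.exp_lt_exp.mpr this
    rwa [Real.exp_log hmtoReal, ← Real.log_rpow hρ0, Real.exp_log (Real.rpow_pos_of_pos hρ0 s)]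
      at this
  exact ENNReal.ofReal_le_of_le_toReal hrs.le

lemma dimH_le_of_gt {d : ℕ} (μ : Measure (Cube d)) [IsProbabilityMeasure μ] {h s : ℝ}
    (hh : 0 ≤ h) (hs : h < s) :
    dimH {x : Cube d | locDim μ x ≤ (h : EReal)} ≤ ENNReal.ofReal s := by
  set E := {x : Cube d | locDim μ x ≤ (h : EReal)} with hE
  have hs0 : 0 < s := hh.trans_lt hs
  set δ : ℕ → ℝ := fun n => 1 / ((n : ℝ) + 2) with hδ
  have hδ0 : ∀ n, 0 < δ n := fun n => by positivity
  have hδhalf : ∀ n, δ n ≤ 1 / 2 := by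
    intro n
    rw [hδ]
    simp only
    rw [div_le_div_iff₀ (by positivity) (by norm_num)]
    have : (0:ℝ) ≤ (n:ℝ) := Nat.cast_nonneg n
    linarith
  set T : ℕ → Set (Cube d × ℝ) := fun n =>
    {p | p.1 ∈ E ∧ 0 < p.2 ∧ p.2 < δ n ∧ ENNReal.ofReal (p.2 ^ s) ≤ μ (Metric.ball p.1 p.2)}
    with hT
  have key : ∀ n, ∃ u ⊆ T n, (u.PairwiseDisjoint fun a => closedBall a.1 a.2) ∧
      ∀ a ∈ T n, ∃ b ∈ u, closedBall a.1 a.2 ⊆ closedBall b.1 (5 * b.2) := fun n =>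
    Vitali.exists_disjoint_subfamily_covering_enlargement_closedBall (T n) Prod.fst Prod.snd
      (δ n) (fun a ha => ha.2.2.1.le) 5 (by norm_num)
  choose u hu hdisj hcov using key
  have hpair : ∀ n, Pairwise fun (i j : ↥(u n)) =>
      Disjoint (closedBall (i : Cube d × ℝ).1 (i : Cube d × ℝ).2)
        (closedBall (j : Cube d × ℝ).1 (j : Cube d × ℝ).2) := by
    intro n i j hij
    exact hdisj n i.2 j.2 (fun e => hij (Subtype.ext e))
  haveI cnt : ∀ n, Countable ↥(u n) := by
    intro n
    have hcnt : Set.Countable {i : ↥(u n) |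
        0 < μ (closedBall (i : Cube d × ℝ).1 (i : Cube d × ℝ).2)} :=
      MeasureTheory.Measure.countable_meas_pos_of_disjoint_iUnion
        (fun i => measurableSet_closedBall) (hpair n)
    have huniv : {i : ↥(u n) |
        0 < μ (closedBall (i : Cube d × ℝ).1 (i : Cube d × ℝ).2)} = Set.univ := by
      apply Set.eq_univ_of_forall
      intro i
      obtain ⟨hxE, hρ0, hρδ, hμb⟩ := hu n i.2
      have : (0:ℝ≥0∞) < ENNReal.ofReal ((i : Cube d × ℝ).2 ^ s) :=
        ENNReal.ofReal_pos.mpr (Real.rpow_pos_of_pos hρ0 s)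
      exact this.trans_le (hμb.trans (measure_mono ball_subset_closedBall))
    rw [huniv] at hcnt
    exact Set.countable_univ_iff.mp hcnt
  set t : ∀ n, ↥(u n) → Set (Cube d) :=
    fun n b => closedBall (b : Cube d × ℝ).1 (5 * (b : Cube d × ℝ).2) with ht
  have hdiam : ∀ n (i : ↥(u n)),
      EMetric.diam (t n i) ≤ ENNReal.ofReal (10 * (i : Cube d × ℝ).2) := by
    intro n i
    obtain ⟨hxE, hρ0, hρδ, hμb⟩ := hu n i.2
    have h5 : (0:ℝ) ≤ 5 * (i : Cube d × ℝ).2 := by positivity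
    calc EMetric.diam (t n i) ≤ 2 * ENNReal.ofReal (5 * (i : Cube d × ℝ).2) := by
          rw [ht]; simp only
          rw [← Metric.emetric_closedBall h5]
          exact EMetric.diam_closedBall
      _ = ENNReal.ofReal (10 * (i : Cube d × ℝ).2) := by
          rw [show (2:ℝ≥0∞) = ENNReal.ofReal 2 by simp,
            ← ENNReal.ofReal_mul (by norm_num : (0:ℝ) ≤ 2)]
          ring_nf
  have hht : ∀ n (i : ↥(u n)), EMetric.diam (t n i) ≤ ENNReal.ofReal (10 * δ n) := by
    intro n i
    refine (hdiam n i).trans (ENNReal.ofReal_le_ofReal ?_)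
    have := (hu n i.2).2.2.1
    nlinarith [(hu n i.2).2.1]
  have hhst : ∀ n, E ⊆ ⋃ i, t n i := by
    intro n x hx
    obtain ⟨ρ, hρ0, hρδ, hμb⟩ := good_radius μ hx hs (hδ0 n) (hδhalf n)
    have haT : ((x, ρ) : Cube d × ℝ) ∈ T n := ⟨hx, hρ0, hρδ, hμb⟩
    obtain ⟨b, hb, hsub⟩ := hcov n _ haT
    exact Set.mem_iUnion.mpr ⟨⟨b, hb⟩, hsub (mem_closedBall_self hρ0.le)⟩
  have htend : Filter.Tendsto (fun n => ENNReal.ofReal (10 * δ n)) Filter.atTop (𝓝 0) := by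
    have h1 : Filter.Tendsto (fun n : ℕ => ((n : ℝ) + 2)) Filter.atTop Filter.atTop :=
      Filter.tendsto_atTop_add_const_right _ 2 tendsto_natCast_atTop_atTop
    have h2 : Filter.Tendsto δ Filter.atTop (𝓝 0) := by
      simpa [hδ, one_div, Pi.inv_def] using h1.inv_tendsto_atTop
    have h3 := h2.const_mul (10:ℝ)
    rw [mul_zero] at h3
    have h4 := ENNReal.tendsto_ofReal h3
    rwa [ENNReal.ofReal_zero] at h4
  have hsum : ∀ n, ∑' i : ↥(u n), EMetric.diam (t n i) ^ s ≤ ENNReal.ofReal (10 ^ s) := by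
    intro n
    have hterm : ∀ i : ↥(u n), EMetric.diam (t n i) ^ s ≤
        ENNReal.ofReal (10 ^ s) * μ (closedBall (i : Cube d × ℝ).1 (i : Cube d × ℝ).2) := by
      intro i
      obtain ⟨hxE, hρ0, hρδ, hμb⟩ := hu n i.2
      calc EMetric.diam (t n i) ^ s
          ≤ (ENNReal.ofReal (10 * (i : Cube d × ℝ).2)) ^ s :=
            ENNReal.rpow_le_rpow (hdiam n i) hs0.le
        _ = ENNReal.ofReal ((10 * (i : Cube d × ℝ).2) ^ s) :=
            ENNReal.ofReal_rpow_of_pos (by positivity)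
        _ = ENNReal.ofReal (10 ^ s * (i : Cube d × ℝ).2 ^ s) := by
            rw [Real.mul_rpow (by norm_num) hρ0.le]
        _ = ENNReal.ofReal (10 ^ s) * ENNReal.ofReal ((i : Cube d × ℝ).2 ^ s) :=
            ENNReal.ofReal_mul (by positivity)
        _ ≤ ENNReal.ofReal (10 ^ s) * μ (closedBall (i : Cube d × ℝ).1 (i : Cube d × ℝ).2) := by
            gcongr
            exact hμb.trans (measure_mono ball_subset_closedBall)
    calc ∑' i : ↥(u n), EMetric.diam (t n i) ^ s
        ≤ ∑' i : ↥(u n), ENNReal.ofReal (10 ^ s) *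
            μ (closedBall (i : Cube d × ℝ).1 (i : Cube d × ℝ).2) := ENNReal.tsum_le_tsum hterm
      _ = ENNReal.ofReal (10 ^ s) * ∑' i : ↥(u n),
            μ (closedBall (i : Cube d × ℝ).1 (i : Cube d × ℝ).2) := ENNReal.tsum_mul_left
      _ ≤ ENNReal.ofReal (10 ^ s) * μ Set.univ := by
          gcongr
          exact tsum_measure_le_measure_univ
            (fun i => measurableSet_closedBall.nullMeasurableSet)
            (fun i j hij => (hpair n hij).aedisjoint)
      _ = ENNReal.ofReal (10 ^ s) := by simp
  have hμH : μH[s] E ≤ ENNReal.ofReal (10 ^ s) := by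
    refine (MeasureTheory.Measure.hausdorffMeasure_le_liminf_tsum s E (fun n => ENNReal.ofReal (10 * δ n)) htend t
      (Filter.Eventually.of_forall hht) (Filter.Eventually.of_forall hhst)).trans ?_
    calc Filter.liminf (fun n => ∑' i : ↥(u n), EMetric.diam (t n i) ^ s) Filter.atTop
        ≤ Filter.liminf (fun _ : ℕ => ENNReal.ofReal (10 ^ s)) Filter.atTop :=
          Filter.liminf_le_liminf (Filter.Eventually.of_forall hsum)
      _ = ENNReal.ofReal (10 ^ s) := Filter.liminf_const _
  have hfin : μH[((s.toNNReal : ℝ≥0) : ℝ)] E ≠ ⊤ := by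
    rw [Real.coe_toNNReal s hs0.le]
    exact (hμH.trans_lt ENNReal.ofReal_lt_top).ne
  have := dimH_le_of_hausdorffMeasure_ne_top hfin
  rwa [ENNReal.ofReal]

theorem dimH_levelSet_le' (d : ℕ) (hd : 1 ≤ d) (μ : Measure (Cube d)) [IsProbabilityMeasure μ]
    (h : ℝ) (hh : 0 ≤ h) :
    dimH {x : Cube d | locDim μ x ≤ (h : EReal)} ≤ ENNReal.ofReal (min h d) := by
  set E := {x : Cube d | locDim μ x ≤ (h : EReal)} with hE
  have boundA : dimH E ≤ ENNReal.ofReal h := by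
    refine ENNReal.le_of_forall_pos_le_add ?_
    intro ε hε _
    have hlt : h < h + (ε : ℝ) := lt_add_of_pos_right h (by exact_mod_cast hε)
    calc dimH E ≤ ENNReal.ofReal (h + ε) := dimH_le_of_gt μ hh hlt
      _ = ENNReal.ofReal h + ENNReal.ofReal ε := ENNReal.ofReal_add hh ε.2
      _ = ENNReal.ofReal h + ε := by rw [ENNReal.ofReal_coe_nnreal]
  have boundB : dimH E ≤ ENNReal.ofReal d := by
    have hiso : Isometry ((↑) : Cube d → (Fin d → ℝ)) := isometry_subtype_coe
    calc dimH E = dimH (((↑) : Cube d → (Fin d → ℝ)) '' E) := (hiso.dimH_image E).symm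
      _ ≤ dimH (Set.univ : Set (Fin d → ℝ)) := dimH_mono (Set.subset_univ _)
      _ = d := Real.dimH_univ_pi_fin d
      _ = ENNReal.ofReal d := (ENNReal.ofReal_natCast d).symm
  have hmin : ENNReal.ofReal (min h d) = min (ENNReal.ofReal h) (ENNReal.ofReal d) :=
    Monotone.map_min (fun a b hab => ENNReal.ofReal_le_ofReal hab)
  rw [hmin]
  exact le_min boundA boundB

/-- For every Borel probability measure `μ` on `[0,1]^d` and every `h ≥ 0`,
the set `Ẽ_μ(h) = {x : h_μ(x) ≤ h}` has Hausdorff dimension at most `min(h,d)`; in particular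
so does `E_μ(h)`. -/
theorem dimH_levelSet_le (d : ℕ) (hd : 1 ≤ d) (μ : Measure (Cube d)) [IsProbabilityMeasure μ]
    (h : ℝ) (hh : 0 ≤ h) :
    dimH {x : Cube d | locDim μ x ≤ (h : EReal)} ≤ ENNReal.ofReal (min h d) ∧
    dimH (levelSet μ h) ≤ ENNReal.ofReal (min h d) := by
  refine ⟨dimH_levelSet_le' d hd μ h hh, ?_⟩
  exact (dimH_mono (fun x hx => le_of_eq hx)).trans (dimH_levelSet_le' d hd μ h hh)
end
end

section
/- Let θ ≥ 1 and let (j_p)_{p≥1} be a strictly increasing sequence of positive integers. Then dim_H A_θ = d/θ. -/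
open MeasureTheory Metric Filter Set
open scoped ENNReal NNReal Topology

noncomputable section

/-- The union over `k ∈ Z_j` of the closed balls of radius `2^{-θ j}` centered at the
dyadic centers `(k + e) 2^{-j}`, in the supremum metric of `ℝ^d`. -/
def dyadicBallUnion (d : ℕ) (θ : ℝ) (j : ℕ) : Set (Fin d → ℝ) :=
  ⋃ k : Fin d → Fin (2 ^ j),
    Metric.closedBall (fun i => ((k i : ℝ) + 1 / 2) / 2 ^ j) ((2 : ℝ) ^ (-(θ * (j : ℝ))))

/-- The set `A_θ` of points of `[0,1]^d` belonging to infinitely many of the sets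
`∪_{k ∈ Z_{j_p}} B̄((k+e)2^{-j_p}, 2^{-θ j_p})`. -/
def atheta (d : ℕ) (θ : ℝ) (j : ℕ → ℕ) : Set (Fin d → ℝ) :=
  Set.Icc 0 1 ∩ {x | ∀ P : ℕ, ∃ p, P ≤ p ∧ x ∈ dyadicBallUnion d θ (j p)}

namespace S13

lemma summable_w : Summable (fun n : ℕ => (1:ℝ)/2^(n+1)) := by
  have h : (fun n : ℕ => (1:ℝ)/2^(n+1)) = fun n : ℕ => (1/2) * (1/2)^n := by
    funext n; rw [pow_succ, one_div_pow]; ring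
  rw [h]; exact summable_geometric_two.mul_left _

lemma tsum_w : ∑' n : ℕ, (1:ℝ)/2^(n+1) = 1 := by
  have h : (fun n : ℕ => (1:ℝ)/2^(n+1)) = fun n : ℕ => (1/2) * (1/2)^n := by
    funext n; rw [pow_succ, one_div_pow]; ring
  rw [h, tsum_mul_left, tsum_geometric_two]; norm_num

lemma abs_div_le {c : ℝ} (hc : |c| ≤ 1) {k m : ℕ} (hkm : k ≤ m) :
    |c / 2^(m+1)| ≤ (1:ℝ)/2^(k+1) := by
  rw [abs_div, abs_of_nonneg (by positivity : (0:ℝ) ≤ 2^(m+1))]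
  exact div_le_div₀ (by norm_num) hc (by positivity)
    (pow_le_pow_right₀ one_le_two (by omega))

lemma summable_of_le_one {c : ℕ → ℝ} (hc : ∀ t, |c t| ≤ 1) (π : ℕ → ℕ) (hπ : ∀ t, t ≤ π t) :
    Summable (fun t => c t / 2^(π t + 1)) :=
  Summable.of_norm <| Summable.of_nonneg_of_le (fun t => norm_nonneg _)
    (fun t => abs_div_le (hc t) (hπ t)) summable_w

lemma tsum_w_shift (a : ℕ) : ∑' u : ℕ, (1:ℝ)/2^(a + u + 1) = 1/2^a := by
  have h : (fun u : ℕ => (1:ℝ)/2^(a + u + 1)) = fun u : ℕ => (1/2^a) * (1/2^(u+1)) := by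
    funext u; rw [pow_add, pow_add]; ring
  rw [h, tsum_mul_left, tsum_w, mul_one]

lemma smono_shift {π : ℕ → ℕ} (hπ : StrictMono π) (a u : ℕ) : π a + u ≤ π (u + a) := by
  induction u with
  | zero => simp
  | succ n ih => have := hπ (show n + a < n + 1 + a by omega); omega

/-- tail bound -/
lemma tail_le {c : ℕ → ℝ} (hc : ∀ t, |c t| ≤ 1) {π : ℕ → ℕ} (hπ : StrictMono π) (a : ℕ) :
    |∑' u : ℕ, c (u + a) / 2^(π (u + a) + 1)| ≤ 1/2^(π a) := by
  have hmaj : Summable (fun u : ℕ => (1:ℝ)/2^(π a + u + 1)) := by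
    have h : (fun u : ℕ => (1:ℝ)/2^(π a + u + 1)) = fun u : ℕ => (1/2^(π a)) * (1/2^(u+1)) := by
      funext u; rw [pow_add, pow_add]; ring
    rw [h]; exact summable_w.mul_left _
  have hbd : ∀ u : ℕ, |c (u + a) / 2^(π (u + a) + 1)| ≤ (1:ℝ)/2^(π a + u + 1) := by
    intro u
    have h1 : π a + u ≤ π (u + a) := smono_shift hπ a u
    simpa using abs_div_le (hc (u + a)) (show π a + u ≤ π (u+a) from h1)
  have habs : Summable (fun u : ℕ => |c (u + a) / 2^(π (u + a) + 1)|) :=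
    Summable.of_nonneg_of_le (fun _ => abs_nonneg _) hbd hmaj
  have hns : Summable (fun u : ℕ => ‖c (u + a) / 2^(π (u + a) + 1)‖) := by
    simpa only [Real.norm_eq_abs] using habs
  have h0 := norm_tsum_le_tsum_norm (f := fun u : ℕ => c (u + a) / 2^(π (u + a) + 1)) hns
  simp only [Real.norm_eq_abs] at h0
  calc |∑' u : ℕ, c (u + a) / 2^(π (u + a) + 1)|
      ≤ ∑' u : ℕ, |c (u + a) / 2^(π (u + a) + 1)| := h0
    _ ≤ ∑' u : ℕ, (1:ℝ)/2^(π a + u + 1) := Summable.tsum_le_tsum hbd habs hmaj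
    _ = 1/2^(π a) := tsum_w_shift _

lemma sum_w_range (n : ℕ) : ∑ t ∈ Finset.range n, (1:ℝ)/2^(t+1) = 1 - 1/2^n := by
  induction n with
  | zero => simp
  | succ m ih => rw [Finset.sum_range_succ, ih, pow_succ]; field_simp; ring

lemma w_succ (k : ℕ) : (1:ℝ)/2^k = 1/2^(k+1) + 1/2^(k+1) := by
  rw [pow_succ]; field_simp; ring

/-- middle sum bound -/
lemma mid_le {π : ℕ → ℕ} (hπ : StrictMono π) (a : ℕ) : ∀ b, a < b →
    ∑ t ∈ Finset.Ico a b, (1:ℝ)/2^(π t + 1) ≤ 1/2^(π a) - 1/2^(π (b-1) + 1) := by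
  intro b
  induction b with
  | zero => omega
  | succ m ih =>
    intro hab
    rcases Nat.lt_or_ge a m with h | h
    · rw [Finset.sum_Ico_succ_top (by omega), show m + 1 - 1 = m from rfl]
      have hmono : π (m-1) + 1 ≤ π m := by have := hπ (show m - 1 < m by omega); omega
      have h2 : (1:ℝ)/2^(π (m-1) + 1) ≥ 1/2^(π m) :=
        div_le_div_of_nonneg_left (by norm_num) (by positivity)
          (pow_le_pow_right₀ one_le_two hmono)
      have h3 := w_succ (π m)
      nlinarith [ih h]
    · have hab' : a = m := by omega
      subst hab'
      rw [show a + 1 - 1 = a from rfl, Finset.sum_Ico_succ_top le_rfl, Finset.Ico_self,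
        Finset.sum_empty, zero_add]
      linarith [w_succ (π a)]


lemma rpow_w_alpha (α : ℝ) (k : ℕ) : ((1:ℝ)/2^k) ^ α = (2:ℝ) ^ (-((k:ℝ) * α)) := by
  rw [one_div, ← Real.rpow_natCast 2 k, ← Real.rpow_neg (by norm_num), ← Real.rpow_mul (by norm_num)]
  ring_nf

lemma core_aux (α : ℝ) (hα0 : 0 < α) {π : ℕ → ℕ} (hπ : StrictMono π)
    (hπα : ∀ t : ℕ, α * ((π t : ℝ) + 2) ≤ (t : ℝ) + 2) {c : ℕ → ℝ}
    (hc : ∀ t, c t = 0 ∨ c t = 1 ∨ c t = -1) {N : ℕ} (hN : c N = 1)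
    (hNmin : ∀ t, t < N → c t = 0) :
    |∑' t : ℕ, c t / 2 ^ (t + 1)| ≤ 4 * |∑' t : ℕ, c t / 2 ^ (π t + 1)| ^ α := by
  classical
  have hc1 : ∀ t, |c t| ≤ 1 := by
    intro t; rcases hc t with h | h | h <;> rw [h] <;> norm_num
  have Sδ : Summable (fun t : ℕ => c t / 2 ^ (t + 1)) :=
    summable_of_le_one hc1 id (fun t => le_rfl)
  have Ss : Summable (fun t : ℕ => c t / 2 ^ (π t + 1)) :=
    summable_of_le_one hc1 π (fun t => hπ.le_apply)
  have hsum_prefix : ∀ K : ℕ, N < K →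
      ∑ t ∈ Finset.range (N+1), c t / 2 ^ (t + 1) = 1 / 2^(N+1) := by
    intro K _
    rw [Finset.sum_range_succ, Finset.sum_eq_zero (fun t ht => by
      rw [hNmin t (Finset.mem_range.mp ht)]; ring), hN, zero_add, one_div]
  by_cases hM : ∃ t, N < t ∧ c t ≠ -1
  · -- main case
    set M := Nat.find hM with hMdef
    have hNM : N < M := (Nat.find_spec hM).1
    have hcM : c M ≠ -1 := (Nat.find_spec hM).2
    have hmid : ∀ t, N < t → t < M → c t = -1 := by
      intro t h1 h2
      by_contra hne
      exact (Nat.find_min hM h2) ⟨h1, hne⟩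
    clear_value M
    have hcM0 : 0 ≤ c M := by rcases hc M with h | h | h <;> simp [h] at hcM ⊢ <;> norm_num
    have hM1 : 1 ≤ M := by omega
    -- split δ
    have hsplitδ := Summable.sum_add_tsum_nat_add (M+1) Sδ
    have hsplits := Summable.sum_add_tsum_nat_add (M+1) Ss
    -- finite part of δ
    have hIcoδ : ∑ t ∈ Finset.Ico (N+1) M, c t / 2 ^ (t + 1)
        = -(1/2^(N+1) - 1/2^M) := by
      have h1 : ∑ t ∈ Finset.Ico (N+1) M, c t / 2 ^ (t + 1)
          = ∑ t ∈ Finset.Ico (N+1) M, -((1:ℝ) / 2 ^ (t + 1)) := by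
        refine Finset.sum_congr rfl (fun t ht => ?_)
        obtain ⟨h1, h2⟩ := Finset.mem_Ico.mp ht
        rw [hmid t (by omega) h2]; ring
      rw [h1, Finset.sum_neg_distrib, Finset.sum_Ico_eq_sub _ (by omega : N+1 ≤ M),
        sum_w_range, sum_w_range]
      ring
    have hA : ∑ t ∈ Finset.range (M+1), c t / 2 ^ (t + 1)
        = 1/2^M + c M / 2^(M+1) := by
      rw [Finset.sum_range_succ]
      have : ∑ t ∈ Finset.range M, c t / 2 ^ (t + 1)
          = ∑ t ∈ Finset.range (N+1), c t / 2 ^ (t + 1)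
            + ∑ t ∈ Finset.Ico (N+1) M, c t / 2 ^ (t + 1) := by
        simp only [Finset.range_eq_Ico]
        exact (Finset.sum_Ico_consecutive _ (by omega : 0 ≤ N+1) (by omega : N+1 ≤ M)).symm
      rw [this, hsum_prefix (M+1) (by omega), hIcoδ]
      ring
    -- tail of δ
    have hTδ : |∑' u : ℕ, c (u + (M+1)) / 2 ^ ((u + (M+1)) + 1)| ≤ 1/2^(M+1) := by
      have := tail_le hc1 (strictMono_id) (M+1)
      simpa using this
    have hδ : |∑' t : ℕ, c t / 2 ^ (t + 1)| ≤ 2/2^M := by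
      have heq : ∑' t : ℕ, c t / 2 ^ (t + 1)
          = (1/2^M + c M / 2^(M+1)) + ∑' u : ℕ, c (u + (M+1)) / 2 ^ ((u + (M+1)) + 1) := by
        rw [← hA, hsplitδ]
      rw [heq]
      have h1 : |(1:ℝ)/2^M + c M / 2^(M+1)| ≤ 1/2^M + 1/2^(M+1) := by
        have := abs_div_le (hc1 M) (le_refl M)
        calc |(1:ℝ)/2^M + c M / 2^(M+1)| ≤ |(1:ℝ)/2^M| + |c M / 2^(M+1)| := abs_add_le _ _
          _ ≤ 1/2^M + 1/2^(M+1) := by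
              rw [abs_of_nonneg (by positivity : (0:ℝ) ≤ 1/2^M)]
              exact add_le_add le_rfl (abs_div_le (hc1 M) (le_refl M))
      calc |(1/2^M + c M / 2^(M+1)) + ∑' u : ℕ, c (u + (M+1)) / 2 ^ ((u + (M+1)) + 1)|
          ≤ |(1:ℝ)/2^M + c M / 2^(M+1)| + |∑' u : ℕ, c (u + (M+1)) / 2 ^ ((u + (M+1)) + 1)| :=
            abs_add_le _ _
        _ ≤ (1/2^M + 1/2^(M+1)) + 1/2^(M+1) := add_le_add h1 hTδ
        _ = 2/2^M := by rw [w_succ M]; ring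
    -- finite part of s
    have hBge : ∑ t ∈ Finset.range (M+1), c t / 2 ^ (π t + 1) ≥ 1/2^(π (M-1) + 1) := by
      have hpre : ∑ t ∈ Finset.range (N+1), c t / 2 ^ (π t + 1) = 1/2^(π N + 1) := by
        rw [Finset.sum_range_succ, Finset.sum_eq_zero (fun t ht => by
          rw [hNmin t (Finset.mem_range.mp ht)]; ring), hN, zero_add, one_div]
      have hsplit : ∑ t ∈ Finset.range (M+1), c t / 2 ^ (π t + 1)
          = 1/2^(π N + 1) + ∑ t ∈ Finset.Ico (N+1) M, c t / 2 ^ (π t + 1)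
            + c M / 2^(π M + 1) := by
        rw [Finset.sum_range_succ]
        congr 1
        rw [Finset.range_eq_Ico, ← Finset.sum_Ico_consecutive _ (by omega : 0 ≤ N+1) (by omega : N+1 ≤ M),
          ← Finset.range_eq_Ico, hpre]
      rw [hsplit]
      have hIcos : ∑ t ∈ Finset.Ico (N+1) M, c t / 2 ^ (π t + 1)
          ≥ -(1/2^(π N + 1) - 1/2^(π (M-1) + 1)) := by
        rcases Nat.lt_or_ge (N+1) M with h | h
        · have h1 : ∑ t ∈ Finset.Ico (N+1) M, c t / 2 ^ (π t + 1)
              = -∑ t ∈ Finset.Ico (N+1) M, (1:ℝ) / 2 ^ (π t + 1) := by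
            rw [← Finset.sum_neg_distrib]
            refine Finset.sum_congr rfl (fun t ht => ?_)
            obtain ⟨ht1, ht2⟩ := Finset.mem_Ico.mp ht
            rw [hmid t (by omega) ht2]; ring
          have h2 := mid_le hπ (N+1) M h
          have h3 : (1:ℝ)/2^(π (N+1)) ≤ 1/2^(π N + 1) := by
            apply div_le_div_of_nonneg_left (by norm_num) (by positivity)
            exact pow_le_pow_right₀ one_le_two (by have := hπ (show N < N+1 by omega); omega)
          rw [h1]
          linarith
        · have hEq : M = N + 1 := by omega
          subst hEq
          rw [Finset.Ico_self, Finset.sum_empty, show N + 1 - 1 = N from rfl]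
          simp
      have hlast : c M / 2^(π M + 1) ≥ 0 := by positivity
      nlinarith
    -- tail of s
    have hTs : |∑' u : ℕ, c (u + (M+1)) / 2 ^ (π (u + (M+1)) + 1)| ≤ 1/2^(π (M-1) + 2) := by
      refine (tail_le hc1 hπ (M+1)).trans ?_
      apply div_le_div_of_nonneg_left (by norm_num) (by positivity)
      refine pow_le_pow_right₀ one_le_two ?_
      have h1 := hπ (show M - 1 < M by omega)
      have h2 := hπ (show M < M + 1 by omega)
      omega
    have hs : (1:ℝ)/2^(π (M-1) + 2) ≤ |∑' t : ℕ, c t / 2 ^ (π t + 1)| := by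
      have heq : ∑' t : ℕ, c t / 2 ^ (π t + 1)
          = ∑ t ∈ Finset.range (M+1), c t / 2 ^ (π t + 1)
            + ∑' u : ℕ, c (u + (M+1)) / 2 ^ (π (u + (M+1)) + 1) := by rw [hsplits]
      have hw := w_succ (π (M-1) + 1)
      have habs := abs_le.mp hTs
      have : ∑' t : ℕ, c t / 2 ^ (π t + 1) ≥ 1/2^(π (M-1) + 2) := by
        rw [heq]
        have := hBge
        nlinarith [habs.1]
      rw [abs_of_nonneg (le_trans (by positivity) this)]
      exact this
    -- finish
    have hkey : α * ((π (M-1) : ℝ) + 2) ≤ (M : ℝ) + 1 := by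
      have := hπα (M-1)
      have hcast : ((M - 1 : ℕ) : ℝ) = (M : ℝ) - 1 := by
        rw [Nat.cast_sub hM1]; norm_num
      rw [hcast] at this
      linarith
    have hrp : ((1:ℝ)/2^(π (M-1) + 2)) ^ α ≤ |∑' t : ℕ, c t / 2 ^ (π t + 1)| ^ α :=
      Real.rpow_le_rpow (by positivity) hs hα0.le
    have hrw : ((1:ℝ)/2^(π (M-1) + 2)) ^ α = (2:ℝ) ^ (-(((π (M-1) + 2 : ℕ) : ℝ) * α)) :=
      rpow_w_alpha α _
    have hmono : (2:ℝ) ^ (-(((π (M-1) + 2 : ℕ) : ℝ) * α)) ≥ (2:ℝ) ^ (-((M:ℝ) + 1)) := by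
      apply Real.rpow_le_rpow_left_iff (by norm_num : (1:ℝ) < 2) |>.mpr
      push_cast
      nlinarith [hkey]
    have hfin : (2:ℝ) ^ (-((M:ℝ) + 1)) = 1/2^(M+1) := by
      rw [show -((M:ℝ)+1) = -(((M+1:ℕ):ℝ)) by push_cast; ring,
        Real.rpow_neg (by norm_num), Real.rpow_natCast, one_div]
    calc |∑' t : ℕ, c t / 2 ^ (t + 1)| ≤ 2/2^M := hδ
      _ = 4 * (1/2^(M+1)) := by rw [pow_succ]; ring
      _ = 4 * ((2:ℝ) ^ (-((M:ℝ) + 1))) := by rw [hfin]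
      _ ≤ 4 * ((2:ℝ) ^ (-(((π (M-1) + 2 : ℕ) : ℝ) * α))) := by nlinarith [hmono]
      _ = 4 * ((1:ℝ)/2^(π (M-1) + 2)) ^ α := by rw [hrw]
      _ ≤ 4 * |∑' t : ℕ, c t / 2 ^ (π t + 1)| ^ α := by nlinarith [hrp]
  · -- all -1 after N : δ = 0
    push_neg at hM
    have hδ0 : ∑' t : ℕ, c t / 2 ^ (t + 1) = 0 := by
      have hsplit := Summable.sum_add_tsum_nat_add (N+1) Sδ
      have h1 : ∑ t ∈ Finset.range (N+1), c t / 2 ^ (t + 1) = 1/2^(N+1) :=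
        hsum_prefix (N+1) (Nat.lt_succ_self N)
      have h2 : ∑' u : ℕ, c (u + (N+1)) / 2 ^ ((u + (N+1)) + 1) = -(1/2^(N+1)) := by
        have hval : ∀ u : ℕ, c (u + (N+1)) / 2 ^ ((u + (N+1)) + 1)
            = -((1:ℝ)/2^((N+1) + u + 1)) := by
          intro u
          rw [hM (u + (N+1)) (by omega), show u + (N+1) + 1 = (N+1) + u + 1 by ring]
          ring
        rw [tsum_congr hval, tsum_neg, tsum_w_shift]
      rw [← hsplit, h1, h2]; ring
    rw [hδ0, abs_zero]
    positivity

lemma core (α : ℝ) (hα0 : 0 < α) {π : ℕ → ℕ} (hπ : StrictMono π)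
    (hπα : ∀ t : ℕ, α * ((π t : ℝ) + 2) ≤ (t : ℝ) + 2) {c : ℕ → ℝ}
    (hc : ∀ t, c t = 0 ∨ c t = 1 ∨ c t = -1) :
    |∑' t : ℕ, c t / 2 ^ (t + 1)| ≤ 4 * |∑' t : ℕ, c t / 2 ^ (π t + 1)| ^ α := by
  classical
  by_cases hz : ∀ t, c t = 0
  · have h0 : ∑' t : ℕ, c t / 2 ^ (t + 1) = 0 := by
      rw [tsum_congr (fun t => by rw [hz t]; simp : ∀ t : ℕ, c t / 2 ^ (t + 1) = 0), tsum_zero]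
    rw [h0, abs_zero]; positivity
  · push_neg at hz
    have hex : ∃ t, c t ≠ 0 := hz
    set N := Nat.find hex with hNdef
    have hNne : c N ≠ 0 := Nat.find_spec hex
    have hNmin : ∀ t, t < N → c t = 0 := fun t ht => not_not.mp (Nat.find_min hex ht)
    rcases hc N with h | h | h
    · exact absurd h hNne
    · exact core_aux α hα0 hπ hπα hc h hNmin
    · have hneg : ∀ t, (-c) t = 0 ∨ (-c) t = 1 ∨ (-c) t = -1 := by
        intro t; rcases hc t with h' | h' | h' <;> simp [h']
      have hN1 : (-c) N = 1 := by simp [h]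
      have hNmin' : ∀ t, t < N → (-c) t = 0 := by intro t ht; simp [hNmin t ht]
      have := core_aux α hα0 hπ hπα hneg hN1 hNmin'
      have e1 : ∑' t : ℕ, (-c) t / 2 ^ (t + 1) = -∑' t : ℕ, c t / 2 ^ (t + 1) := by
        rw [← tsum_neg]
        exact tsum_congr (fun t => by simp [neg_div])
      have e2 : ∑' t : ℕ, (-c) t / 2 ^ (π t + 1) = -∑' t : ℕ, c t / 2 ^ (π t + 1) := by
        rw [← tsum_neg]
        exact tsum_congr (fun t => by simp [neg_div])
      rw [e1, e2, abs_neg, abs_neg] at this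
      exact this

/-! ### Binary digits -/

def dig (y : ℝ) (n : ℕ) : ℤ := ⌊y * 2 ^ (n+1)⌋ - 2 * ⌊y * 2 ^ n⌋

lemma dig_nonneg (y : ℝ) (n : ℕ) : 0 ≤ dig y n := by
  have h1 : ((2 * ⌊y * 2^n⌋ : ℤ) : ℝ) ≤ y * 2^(n+1) := by
    push_cast
    have := Int.floor_le (y * 2^n)
    rw [pow_succ]; nlinarith
  have := Int.le_floor.mpr h1
  unfold dig; omega

lemma dig_le_one (y : ℝ) (n : ℕ) : dig y n ≤ 1 := by
  have h1 : y * 2^(n+1) < ((2 * ⌊y * 2^n⌋ + 2 : ℤ) : ℝ) := by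
    push_cast
    have := Int.lt_floor_add_one (y * 2^n)
    rw [pow_succ]; nlinarith
  have := Int.floor_lt.mpr h1
  unfold dig; omega

lemma dig_abs_le (y : ℝ) (n : ℕ) : |((dig y n : ℤ) : ℝ)| ≤ 1 := by
  have h1 := dig_nonneg y n; have h2 := dig_le_one y n
  rw [abs_of_nonneg (by exact_mod_cast h1)]
  exact_mod_cast h2

lemma dig_partial (y : ℝ) (N : ℕ) :
    ∑ n ∈ Finset.range N, ((dig y n : ℝ) / 2^(n+1))
      = (⌊y * 2^N⌋ : ℝ)/2^N - (⌊y⌋ : ℝ) := by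
  have h : ∀ n ∈ Finset.range N, ((dig y n : ℝ)/2^(n+1))
      = (fun n : ℕ => (⌊y*2^n⌋:ℝ)/2^n) (n+1) - (fun n : ℕ => (⌊y*2^n⌋:ℝ)/2^n) n := by
    intro n _
    simp only [dig]
    push_cast
    rw [pow_succ]
    field_simp
  rw [Finset.sum_congr rfl h, Finset.sum_range_sub (fun n : ℕ => (⌊y*2^n⌋:ℝ)/2^n) N]
  norm_num

lemma summable_dig (y : ℝ) : Summable (fun n : ℕ => (dig y n : ℝ) / 2^(n+1)) :=
  summable_of_le_one (fun n => dig_abs_le y n) id (fun _ => le_rfl)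

lemma hasSum_dig {y : ℝ} (hy : y ∈ Ico (0:ℝ) 1) :
    HasSum (fun n : ℕ => (dig y n : ℝ) / 2^(n+1)) y := by
  have hfl : ⌊y⌋ = 0 := Int.floor_eq_zero_iff.mpr ⟨hy.1, hy.2⟩
  rw [(summable_dig y).hasSum_iff_tendsto_nat]
  have heq : ∀ N : ℕ, ∑ n ∈ Finset.range N, ((dig y n : ℝ) / 2^(n+1))
      = (⌊y * 2^N⌋ : ℝ)/2^N := by
    intro N; rw [dig_partial, hfl]; norm_num
  have hle : ∀ N : ℕ, (⌊y * 2^N⌋ : ℝ)/2^N ≤ y := by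
    intro N
    have := Int.floor_le (y * 2^N)
    rw [div_le_iff₀ (by positivity)]; linarith
  have hge : ∀ N : ℕ, y - (1/2)^N ≤ (⌊y * 2^N⌋ : ℝ)/2^N := by
    intro N
    have := Int.lt_floor_add_one (y * 2^N)
    rw [le_div_iff₀ (by positivity : (0:ℝ) < 2^N)]
    have h2 : ((1:ℝ)/2)^N * 2^N = 1 := by
      rw [div_pow, one_pow, div_mul_cancel₀]
      positivity
    nlinarith
  refine tendsto_of_tendsto_of_tendsto_of_le_of_le
    (g := fun N : ℕ => y - (1/2:ℝ)^N) (h := fun _ : ℕ => y) ?_ tendsto_const_nhds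
    (fun N => by rw [heq N]; exact hge N) (fun N => by rw [heq N]; exact hle N)
  have := tendsto_pow_atTop_nhds_zero_of_lt_one (show (0:ℝ) ≤ 1/2 by norm_num)
    (show (1:ℝ)/2 < 1 by norm_num)
  simpa using tendsto_const_nhds.sub this

lemma tsum_dig {y : ℝ} (hy : y ∈ Ico (0:ℝ) 1) :
    ∑' n : ℕ, (dig y n : ℝ) / 2^(n+1) = y := (hasSum_dig hy).tsum_eq

/-! ### The block layout -/

open scoped Classical

section layoutdefs
variable (j : ℕ → ℕ) (θ α : ℝ)

def qs : ℕ → ℕ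
  | 0 => ⌈1/(1-α*θ)⌉₊ + 1
  | (m+1) =>
    let Q := qs m
    let T := ⌈θ * (j Q : ℝ)⌉₊
    max (Q+1) (max (T+1) (⌈(((m:ℝ)+1) * T + 1)/(1-α*θ)⌉₊ + 1))

def Jm (m : ℕ) : ℕ := j (qs j θ α m)

def Tm (m : ℕ) : ℕ := ⌈θ * (Jm j θ α m : ℝ)⌉₊

def FixedP (n : ℕ) : Prop := ∃ m, Jm j θ α m ≤ n ∧ n < Tm j θ α m

def FreeP (n : ℕ) : Prop := ¬ FixedP j θ α n

noncomputable def Fr (n : ℕ) : ℕ := Nat.count (FreeP j θ α) n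

noncomputable def pis (t : ℕ) : ℕ := Nat.nth (FreeP j θ α) t

/-- partial sums of block sizes -/
noncomputable def SR (m : ℕ) : ℝ :=
  ∑ m' ∈ Finset.range (m+1), ((Tm j θ α m' : ℝ) - (Jm j θ α m' : ℝ))

end layoutdefs

variable {j : ℕ → ℕ} {θ α : ℝ}

lemma qs_succ (m : ℕ) : qs j θ α (m+1)
    = max (qs j θ α m + 1) (max (Tm j θ α m + 1)
        (⌈(((m:ℝ)+1) * (Tm j θ α m) + 1)/(1-α*θ)⌉₊ + 1)) := rfl

lemma qs_strictMono : StrictMono (qs j θ α) := by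
  apply strictMono_nat_of_lt_succ
  intro m
  rw [qs_succ]
  have := le_max_left (qs j θ α m + 1) (max (Tm j θ α m + 1)
    (⌈(((m:ℝ)+1) * (Tm j θ α m) + 1)/(1-α*θ)⌉₊ + 1))
  omega

lemma Jm_ge_qs (hj : StrictMono j) (m : ℕ) : qs j θ α m ≤ Jm j θ α m := hj.le_apply

lemma Jm_le_Tm (hθ : 1 ≤ θ) (m : ℕ) : Jm j θ α m ≤ Tm j θ α m := by
  have h1 : (Jm j θ α m : ℝ) ≤ θ * (Jm j θ α m : ℝ) := by
    nlinarith [Nat.cast_nonneg (α := ℝ) (Jm j θ α m)]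
  have h1' : θ * (Jm j θ α m : ℝ) ≤ ((Tm j θ α m : ℕ) : ℝ) := Nat.le_ceil _
  have h2 : (Jm j θ α m : ℝ) ≤ (Tm j θ α m : ℝ) := le_trans h1 h1'
  exact_mod_cast h2

lemma Tm_lt_Jm_succ (hj : StrictMono j) (m : ℕ) : Tm j θ α m < Jm j θ α (m+1) := by
  have h1 : Tm j θ α m + 1 ≤ qs j θ α (m+1) := by
    rw [qs_succ]
    exact le_trans (le_max_left _ _) (le_max_right _ _)
  have h2 := Jm_ge_qs (θ := θ) (α := α) hj (m+1)
  omega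

lemma Jm_strictMono (hj : StrictMono j) (hθ : 1 ≤ θ) : StrictMono (Jm j θ α) := by
  apply strictMono_nat_of_lt_succ
  intro m
  exact lt_of_le_of_lt (Jm_le_Tm hθ m) (Tm_lt_Jm_succ hj m)

lemma Tm_mono (hj : StrictMono j) (hθ : 1 ≤ θ) : Monotone (Tm (α := α) j θ) := by
  apply monotone_nat_of_le_succ
  intro m
  exact le_trans (le_of_lt (Tm_lt_Jm_succ hj m)) (Jm_le_Tm hθ (m+1))

lemma Tm_lt_Jm (hj : StrictMono j) (hθ : 1 ≤ θ) {m' m : ℕ} (h : m' < m) :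
    Tm j θ α m' < Jm j θ α m :=
  lt_of_lt_of_le (Tm_lt_Jm_succ hj m') ((Jm_strictMono hj hθ).monotone h)

lemma Tm_free (hj : StrictMono j) (hθ : 1 ≤ θ) (m : ℕ) : FreeP j θ α (Tm j θ α m) := by
  rintro ⟨m', h1, h2⟩
  rcases le_or_gt m' m with h | h
  · exact absurd (Tm_mono (α := α) hj hθ h) (by omega)
  · exact absurd (Tm_lt_Jm (α := α) hj hθ h) (by omega)

lemma Tm_strictMono (hj : StrictMono j) (hθ : 1 ≤ θ) : StrictMono (Tm (α := α) j θ) := by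
  apply strictMono_nat_of_lt_succ
  intro m
  exact lt_of_lt_of_le (Tm_lt_Jm_succ hj m) (Jm_le_Tm hθ (m+1))

lemma FreeP_infinite (hj : StrictMono j) (hθ : 1 ≤ θ) : (setOf (FreeP j θ α)).Infinite :=
  infinite_of_injective_forall_mem (f := fun m : ℕ => Tm j θ α m)
    (Tm_strictMono hj hθ).injective (fun m => Tm_free hj hθ m)

lemma pis_strictMono (hj : StrictMono j) (hθ : 1 ≤ θ) : StrictMono (pis j θ α) :=
  Nat.nth_strictMono (FreeP_infinite hj hθ)

lemma pis_free (hj : StrictMono j) (hθ : 1 ≤ θ) (t : ℕ) : FreeP j θ α (pis j θ α t) :=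
  Nat.nth_mem_of_infinite (FreeP_infinite hj hθ) t

lemma Fr_pis (hj : StrictMono j) (hθ : 1 ≤ θ) (t : ℕ) : Fr j θ α (pis j θ α t) = t :=
  Nat.count_nth_of_infinite (FreeP_infinite hj hθ) t

lemma pis_Fr {n : ℕ} (hn : FreeP j θ α n) : pis j θ α (Fr j θ α n) = n :=
  Nat.nth_count hn

lemma one_sub_pos (hαθ : α * θ < 1) : (0:ℝ) < 1 - α * θ := by linarith

lemma α_le_one (hθ : 1 ≤ θ) (hα0 : 0 < α) (hαθ : α * θ < 1) : α ≤ 1 := by nlinarith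

lemma Jm0_ge (hj : StrictMono j) (hα0 : 0 < α) (hαθ : α * θ < 1) :
    (1:ℝ) ≤ (1 - α*θ) * (Jm j θ α 0 : ℝ) := by
  have h1 : qs j θ α 0 = ⌈1/(1-α*θ)⌉₊ + 1 := rfl
  have h2 : (1:ℝ)/(1-α*θ) ≤ ⌈(1:ℝ)/(1-α*θ)⌉₊ := Nat.le_ceil _
  have h3 : (⌈(1:ℝ)/(1-α*θ)⌉₊ : ℝ) ≤ Jm j θ α 0 := by
    have h0 := Jm_ge_qs (θ := θ) (α := α) hj 0
    rw [h1] at h0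
    exact_mod_cast (by omega : ⌈(1:ℝ)/(1-α*θ)⌉₊ ≤ Jm j θ α 0)
  have h4 : (1:ℝ)/(1-α*θ) ≤ Jm j θ α 0 := le_trans h2 h3
  rw [div_le_iff₀ (one_sub_pos hαθ)] at h4
  linarith

lemma Jm_succ_ge (hj : StrictMono j) (hα0 : 0 < α) (hαθ : α * θ < 1) (m : ℕ) :
    ((m:ℝ)+1) * (Tm j θ α m) + 1 ≤ (1 - α*θ) * (Jm j θ α (m+1) : ℝ) := by
  have h1 : ⌈(((m:ℝ)+1) * (Tm j θ α m) + 1)/(1-α*θ)⌉₊ + 1 ≤ qs j θ α (m+1) := by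
    rw [qs_succ]
    exact le_trans (le_max_right _ _) (le_max_right _ _)
  have h2 := Jm_ge_qs (θ := θ) (α := α) hj (m+1)
  have h3 : (⌈(((m:ℝ)+1) * (Tm j θ α m) + 1)/(1-α*θ)⌉₊ : ℝ) ≤ Jm j θ α (m+1) := by
    exact_mod_cast (by omega : ⌈(((m:ℝ)+1) * (Tm j θ α m) + 1)/(1-α*θ)⌉₊ ≤ Jm j θ α (m+1))
  have h4 := (Nat.le_ceil ((((m:ℝ)+1) * (Tm j θ α m) + 1)/(1-α*θ))).trans h3
  rw [div_le_iff₀ (one_sub_pos hαθ)] at h4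
  linarith

lemma Tm_le_aux (hθ : 1 ≤ θ) (m : ℕ) : (Tm j θ α m : ℝ) ≤ θ * (Jm j θ α m) + 1 :=
  le_of_lt (Nat.ceil_lt_add_one (mul_nonneg (by linarith) (Nat.cast_nonneg _)))

lemma SR_le (hj : StrictMono j) (hθ : 1 ≤ θ) (hα0 : 0 < α) (hαθ : α * θ < 1) (m : ℕ) :
    SR j θ α m ≤ (1-α) * (Tm j θ α m : ℝ) := by
  induction m with
  | zero =>
    show ∑ m' ∈ Finset.range 1, _ ≤ _
    rw [Finset.sum_range_one]
    have hT := Tm_le_aux (j := j) (α := α) hθ 0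
    have hJ := Jm0_ge hj hα0 hαθ
    have hα1 := α_le_one hθ hα0 hαθ
    nlinarith [mul_nonneg hα0.le (sub_nonneg.mpr hT), Nat.cast_nonneg (α := ℝ) (Jm j θ α 0),
      Nat.cast_nonneg (α := ℝ) (Tm j θ α 0)]
  | succ m ih =>
    show ∑ m' ∈ Finset.range (m+2), _ ≤ _
    rw [Finset.sum_range_succ]
    have hT := Tm_le_aux (j := j) (α := α) hθ (m+1)
    have hG := Jm_succ_ge hj hα0 hαθ m
    have hα1 := α_le_one hθ hα0 hαθ
    have h0 : (0:ℝ) ≤ (Tm j θ α m : ℝ) := Nat.cast_nonneg _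
    have h1 : (0:ℝ) ≤ (m:ℝ) := Nat.cast_nonneg _
    have ih' : ∑ m' ∈ Finset.range (m+1), ((Tm j θ α m' : ℝ) - (Jm j θ α m' : ℝ))
        ≤ (1-α) * (Tm j θ α m : ℝ) := ih
    nlinarith [mul_nonneg hα0.le (sub_nonneg.mpr hT), mul_nonneg h1 h0,
      mul_nonneg hα0.le h0]

lemma count_bound (hj : StrictMono j) (hθ : 1 ≤ θ) (hα0 : 0 < α) (hαθ : α * θ < 1)
    {n : ℕ} (hn : FreeP j θ α n) :
    α * ((n:ℝ) + 2) ≤ (Fr j θ α n : ℝ) + 2 := by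
  classical
  have hα1 := α_le_one hθ hα0 hαθ
  set Fx := (Finset.range n).filter (fun x => ¬ FreeP j θ α x) with hFx
  have hcount : ((Finset.range n).filter (FreeP j θ α)).card + Fx.card = n := by
    rw [hFx]
    simpa using Finset.card_filter_add_card_filter_not
      (s := Finset.range n) (p := FreeP j θ α)
  have hFr : (Fr j θ α n) = ((Finset.range n).filter (FreeP j θ α)).card := by
    rw [Fr, Nat.count_eq_card_filter_range]
  have hFrn : Fr j θ α n + Fx.card = n := by rw [hFr]; omega
  have hcard : (Fx.card : ℝ) ≤ (1-α) * (n:ℝ) := by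
    by_cases hB : ∃ m, Tm j θ α m ≤ n
    · obtain ⟨m0, hm0⟩ := hB
      have hm0n : m0 ≤ n := by
        have e1 : m0 ≤ qs j θ α m0 := (qs_strictMono (j := j) (θ := θ) (α := α)).le_apply
        have e2 := Jm_ge_qs (θ := θ) (α := α) hj m0
        have e3 := Jm_le_Tm (j := j) (α := α) hθ m0
        omega
      set ms := Nat.findGreatest (fun m => Tm j θ α m ≤ n) n with hms
      have hspec : Tm j θ α ms ≤ n :=
        Nat.findGreatest_spec (P := fun m => Tm j θ α m ≤ n) hm0n hm0
      have hmax : ∀ m, Tm j θ α m ≤ n → m ≤ ms := by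
        intro m hm
        refine Nat.le_findGreatest (P := fun m => Tm j θ α m ≤ n) ?_ hm
        have e1 : m ≤ qs j θ α m := (qs_strictMono (j := j) (θ := θ) (α := α)).le_apply
        have e2 := Jm_ge_qs (θ := θ) (α := α) hj m
        have e3 := Jm_le_Tm (j := j) (α := α) hθ m
        omega
      have hsub : Fx ⊆ (Finset.range (ms+1)).biUnion
          (fun m => Finset.Ico (Jm j θ α m) (Tm j θ α m)) := by
        intro k hk
        rw [hFx, Finset.mem_filter, Finset.mem_range] at hk
        obtain ⟨hkn, hkf⟩ := hk
        obtain ⟨m, h1, h2⟩ := not_not.mp hkf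
        have hTm : Tm j θ α m ≤ n := by
          by_contra hc
          exact hn ⟨m, by omega, by omega⟩
        rw [Finset.mem_biUnion]
        exact ⟨m, Finset.mem_range.mpr (by have := hmax m hTm; omega),
          Finset.mem_Ico.mpr ⟨h1, h2⟩⟩
      have hc1 : Fx.card ≤ ∑ m ∈ Finset.range (ms+1), (Tm j θ α m - Jm j θ α m) := by
        refine le_trans (Finset.card_le_card hsub) ?_
        refine le_trans (Finset.card_biUnion_le) ?_
        refine Finset.sum_le_sum (fun m _ => ?_)
        rw [Nat.card_Ico]
      have hc2 : ((∑ m ∈ Finset.range (ms+1), (Tm j θ α m - Jm j θ α m) : ℕ) : ℝ)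
          = SR j θ α ms := by
        rw [SR, Nat.cast_sum]
        refine Finset.sum_congr rfl (fun m _ => ?_)
        rw [Nat.cast_sub (Jm_le_Tm hθ m)]
      have hc3 := SR_le hj hθ hα0 hαθ ms
      have hc4 : (1-α) * (Tm j θ α ms : ℝ) ≤ (1-α) * (n:ℝ) := by
        apply mul_le_mul_of_nonneg_left _ (by linarith)
        exact_mod_cast hspec
      calc (Fx.card : ℝ)
          ≤ ((∑ m ∈ Finset.range (ms+1), (Tm j θ α m - Jm j θ α m) : ℕ) : ℝ) := by
            exact_mod_cast hc1
        _ = SR j θ α ms := hc2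
        _ ≤ (1-α) * (n:ℝ) := le_trans hc3 hc4
    · push_neg at hB
      have hFx0 : Fx = ∅ := by
        rw [hFx, Finset.filter_eq_empty_iff]
        intro k hk
        rw [Finset.mem_range] at hk
        rw [not_not]
        rintro ⟨m, h1, h2⟩
        have := hB m
        exact hn ⟨m, by omega, by omega⟩
      rw [hFx0]
      simp only [Finset.card_empty, Nat.cast_zero]
      nlinarith [Nat.cast_nonneg (α := ℝ) n]
  have hcast : (Fr j θ α n : ℝ) = (n:ℝ) - (Fx.card : ℝ) := by
    have h5 : (Fr j θ α n : ℝ) + (Fx.card : ℝ) = (n : ℝ) := by exact_mod_cast hFrn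
    linarith
  rw [hcast]
  nlinarith [Nat.cast_nonneg (α := ℝ) n]

lemma layout_core (hj : StrictMono j) (hθ : 1 ≤ θ) (hα0 : 0 < α) (hαθ : α * θ < 1) (t : ℕ) :
    α * ((pis j θ α t : ℝ) + 2) ≤ (t:ℝ) + 2 := by
  have h := count_bound hj hθ hα0 hαθ (pis_free hj hθ t)
  rwa [Fr_pis hj hθ] at h

/-! ### The Cantor-type map -/

section mapdefs
variable (j : ℕ → ℕ) (θ α : ℝ)

def patB (n : ℕ) : ℕ :=
  if ∃ m, n = Jm j θ α m ∧ Jm j θ α m < Tm j θ α m then 1 else 0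

noncomputable def aB (y : ℝ) (n : ℕ) : ℕ :=
  if FixedP j θ α n then patB j θ α n else (dig y (Fr j θ α n)).toNat

noncomputable def fmap (y : ℝ) : ℝ := ∑' n : ℕ, (aB j θ α y n : ℝ) / 2^(n+1)

end mapdefs

variable {j : ℕ → ℕ} {θ α : ℝ}

lemma patB_le_one (n : ℕ) : patB j θ α n ≤ 1 := by
  rw [patB]; split <;> omega

lemma aB_le_one (y : ℝ) (n : ℕ) : aB j θ α y n ≤ 1 := by
  rw [aB]; split
  · exact patB_le_one n
  · have h1 := dig_le_one y (Fr j θ α n); omega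

lemma aB_abs (y : ℝ) (n : ℕ) : |((aB j θ α y n : ℕ) : ℝ)| ≤ 1 := by
  rw [abs_of_nonneg (Nat.cast_nonneg _)]
  exact_mod_cast aB_le_one y n

lemma summable_aB (y : ℝ) : Summable (fun n : ℕ => ((aB j θ α y n : ℕ) : ℝ) / 2^(n+1)) :=
  summable_of_le_one (fun n => aB_abs y n) id (fun _ => le_rfl)

lemma fmap_mem_Icc (y : ℝ) : fmap j θ α y ∈ Icc (0:ℝ) 1 := by
  constructor
  · exact tsum_nonneg (fun n => by positivity)
  · rw [← tsum_w]
    refine Summable.tsum_le_tsum (fun n => ?_) (summable_aB y) summable_w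
    refine div_le_div₀ (by norm_num) ?_ (by positivity) le_rfl
    exact_mod_cast aB_le_one y n

lemma aB_free {n : ℕ} (hn : FreeP j θ α n) (y : ℝ) :
    ((aB j θ α y n : ℕ) : ℝ) = ((dig y (Fr j θ α n) : ℤ) : ℝ) := by
  rw [aB, if_neg hn, ← Int.cast_natCast (R := ℝ), Int.toNat_of_nonneg (dig_nonneg _ _)]

lemma patB_one {m : ℕ} (h : Jm j θ α m < Tm j θ α m) : patB j θ α (Jm j θ α m) = 1 :=
  if_pos ⟨m, rfl, h⟩

lemma patB_zero (hj : StrictMono j) (hθ : 1 ≤ θ) {m n : ℕ}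
    (h1 : Jm j θ α m < n) (h2 : n < Tm j θ α m) : patB j θ α n = 0 := by
  rw [patB, if_neg]
  rintro ⟨m', he, hlt⟩
  rcases lt_trichotomy m' m with h | h | h
  · have e1 := Tm_lt_Jm (α := α) hj hθ h
    have e2 := Jm_le_Tm (j := j) (α := α) hθ m'
    omega
  · subst h; omega
  · have e1 := Tm_lt_Jm (α := α) hj hθ h
    omega

lemma sum_two_pow (J : ℕ) : ∑ n ∈ Finset.range J, 2^(J-1-n) = 2^J - 1 := by
  induction J with
  | zero => simp
  | succ J ih =>
    rw [Finset.sum_range_succ]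
    have h1 : ∀ n ∈ Finset.range J, (2:ℕ)^(J+1-1-n) = 2 * 2^(J-1-n) := by
      intro n hn
      rw [Finset.mem_range] at hn
      rw [show J+1-1-n = (J-1-n)+1 by omega, pow_succ]
      ring
    rw [Finset.sum_congr rfl h1, ← Finset.mul_sum, ih]
    have h2 : 1 ≤ 2^J := Nat.one_le_two_pow
    rw [show J+1-1-J = 0 by omega]
    rw [pow_succ]
    omega

/-- the natural prefix of `fmap y` at level `J` -/
noncomputable def kpre (j : ℕ → ℕ) (θ α : ℝ) (y : ℝ) (J : ℕ) : ℕ :=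
  ∑ n ∈ Finset.range J, aB j θ α y n * 2^(J-1-n)

lemma kpre_lt (y : ℝ) (J : ℕ) : kpre j θ α y J < 2^J := by
  have h1 : kpre j θ α y J ≤ ∑ n ∈ Finset.range J, 2^(J-1-n) := by
    refine Finset.sum_le_sum (fun n _ => ?_)
    calc aB j θ α y n * 2^(J-1-n) ≤ 1 * 2^(J-1-n) :=
          Nat.mul_le_mul_right _ (aB_le_one y n)
      _ = 2^(J-1-n) := one_mul _
  rw [sum_two_pow] at h1
  have h2 : 1 ≤ 2^J := Nat.one_le_two_pow
  omega

lemma kpre_div (y : ℝ) (J : ℕ) :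
    ((kpre j θ α y J : ℕ) : ℝ) / 2^J
      = ∑ n ∈ Finset.range J, ((aB j θ α y n : ℕ) : ℝ) / 2^(n+1) := by
  rw [kpre, Nat.cast_sum, Finset.sum_div]
  refine Finset.sum_congr rfl (fun n hn => ?_)
  rw [Finset.mem_range] at hn
  push_cast
  have h2 : (2:ℝ)^(J-1-n) * 2^(n+1) = 2^J := by
    rw [← pow_add]; congr 1; omega
  rw [div_eq_div_iff (by positivity : ((2:ℝ)^J) ≠ 0) (by positivity : ((2:ℝ)^(n+1)) ≠ 0)]
  nlinarith [h2]

lemma tail_nonneg_le (y : ℝ) (T : ℕ) :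
    0 ≤ ∑' v : ℕ, ((aB j θ α y (v + T) : ℕ) : ℝ) / 2^((v + T)+1)
      ∧ ∑' v : ℕ, ((aB j θ α y (v + T) : ℕ) : ℝ) / 2^((v + T)+1) ≤ 1/2^T := by
  have hsum : Summable (fun v : ℕ => ((aB j θ α y (v + T) : ℕ) : ℝ) / 2^((v + T)+1)) := by
    have := (summable_aB (j := j) (θ := θ) (α := α) y).comp_injective (add_left_injective T)
    exact this
  constructor
  · exact tsum_nonneg (fun v => by positivity)
  · have hmaj : Summable (fun v : ℕ => (1:ℝ)/2^(T + v + 1)) := by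
      have h : (fun v : ℕ => (1:ℝ)/2^(T + v + 1)) = fun v : ℕ => (1/2^T) * (1/2^(v+1)) := by
        funext v; rw [pow_add, pow_add]; ring
      rw [h]; exact summable_w.mul_left _
    calc ∑' v : ℕ, ((aB j θ α y (v + T) : ℕ) : ℝ) / 2^((v + T)+1)
        ≤ ∑' v : ℕ, (1:ℝ)/2^(T + v + 1) := by
          refine Summable.tsum_le_tsum (fun v => ?_) hsum hmaj
          rw [show v + T + 1 = T + v + 1 by omega]
          refine div_le_div₀ (by norm_num) ?_ (by positivity) le_rfl
          exact_mod_cast aB_le_one y _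
      _ = 1/2^T := tsum_w_shift T

lemma le_rpow_neg {x : ℝ} {X : ℕ} (h : x ≤ X) : (1:ℝ)/2^X ≤ (2:ℝ)^(-x) := by
  have h1 : (1:ℝ)/2^X = (2:ℝ)^(-(X:ℝ)) := by
    rw [Real.rpow_neg (by norm_num), Real.rpow_natCast, one_div]
  rw [h1]
  exact Real.rpow_le_rpow_of_exponent_le one_le_two (by linarith)

lemma exists_center (hj : StrictMono j) (hθ : 1 ≤ θ) (y : ℝ) (m : ℕ) :
    ∃ k : Fin (2^(Jm j θ α m)),
      |fmap j θ α y - (((k : ℕ) : ℝ) + 1/2)/2^(Jm j θ α m)|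
        ≤ (2:ℝ)^(-(θ * ((Jm j θ α m : ℕ) : ℝ))) := by
  set J := Jm j θ α m with hJ
  set T := Tm j θ α m with hT
  refine ⟨⟨kpre j θ α y J, kpre_lt y J⟩, ?_⟩
  have hsplit := Summable.sum_add_tsum_nat_add J (summable_aB (j := j) (θ := θ) (α := α) y)
  set R := ∑' u : ℕ, ((aB j θ α y (u + J) : ℕ) : ℝ) / 2^((u + J)+1) with hR
  have hf : fmap j θ α y = ((kpre j θ α y J : ℕ) : ℝ)/2^J + R := by
    rw [fmap, ← hsplit, kpre_div]
  have hcenter : (((kpre j θ α y J : ℕ) : ℝ) + 1/2)/2^J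
      = ((kpre j θ α y J : ℕ) : ℝ)/2^J + 1/2^(J+1) := by
    rw [pow_succ]; field_simp
  have hgoal : fmap j θ α y - (((kpre j θ α y J : ℕ) : ℝ) + 1/2)/2^J = R - 1/2^(J+1) := by
    rw [hf, hcenter]; ring
  simp only [Fin.val_mk]
  rw [hgoal]
  have hθJ_le_T : θ * (J:ℝ) ≤ (T:ℕ) := Nat.le_ceil _
  have hJm : Jm j θ α m = J := rfl
  have hTm : Tm j θ α m = T := rfl
  rcases Nat.lt_or_ge J T with hJT | hJT
  · -- nonempty block
    have Sg : Summable (fun u : ℕ => ((aB j θ α y (u + J) : ℕ) : ℝ) / 2^((u + J)+1)) := by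
      have h := (summable_aB (j := j) (θ := θ) (α := α) y).comp_injective
        (add_left_injective J)
      exact h
    have hsplit2 := Summable.sum_add_tsum_nat_add (T-J) Sg
    have hfin : ∑ u ∈ Finset.range (T-J), ((aB j θ α y (u + J) : ℕ) : ℝ) / 2^((u + J)+1)
        = 1/2^(J+1) := by
      have hz : ∀ b ∈ Finset.range (T-J), b ≠ 0 →
          ((aB j θ α y (b + J) : ℕ) : ℝ) / 2^((b + J)+1) = 0 := by
        intro u hu hu0
        rw [Finset.mem_range] at hu
        have hfx : FixedP j θ α (u + J) := ⟨m, by omega, by omega⟩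
        rw [aB, if_pos hfx, patB_zero hj hθ (show Jm j θ α m < u + J by omega)
          (show u + J < Tm j θ α m by omega)]
        norm_num
      rw [Finset.sum_eq_single_of_mem 0 (Finset.mem_range.mpr (by omega)) hz]
      have hfx : FixedP j θ α (0 + J) := ⟨m, by omega, by omega⟩
      rw [aB, if_pos hfx]
      have hp1 : patB j θ α (0 + J) = 1 := by
        rw [show 0 + J = Jm j θ α m by omega]
        exact patB_one (by omega)
      rw [hp1, show 0 + J = J by omega]
      norm_num
    have htail_eq : ∑' v : ℕ, ((aB j θ α y ((v + (T-J)) + J) : ℕ) : ℝ) / 2^(((v + (T-J)) + J)+1)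
        = ∑' v : ℕ, ((aB j θ α y (v + T) : ℕ) : ℝ) / 2^((v + T)+1) :=
      tsum_congr (fun v => by rw [show (v + (T-J)) + J = v + T by omega])
    have h1 := tail_nonneg_le (j := j) (θ := θ) (α := α) y T
    have hReq : R = 1/2^(J+1) + ∑' v : ℕ, ((aB j θ α y (v + T) : ℕ) : ℝ) / 2^((v + T)+1) := by
      rw [hR, ← hsplit2, hfin, htail_eq]
    rw [hReq]
    have he : (1:ℝ)/2^(J+1) + (∑' v : ℕ, ((aB j θ α y (v + T) : ℕ) : ℝ) / 2^((v + T)+1))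
        - 1/2^(J+1) = ∑' v : ℕ, ((aB j θ α y (v + T) : ℕ) : ℝ) / 2^((v + T)+1) := by ring
    rw [he, abs_of_nonneg h1.1]
    exact h1.2.trans (le_rpow_neg hθJ_le_T)
  · -- empty block: T = J
    have hTJ : T = J := le_antisymm hJT (Jm_le_Tm hθ m)
    have h1 := tail_nonneg_le (j := j) (θ := θ) (α := α) y J
    rw [← hR] at h1
    have h2 : |R - 1/2^(J+1)| ≤ 1/2^(J+1) := by
      rw [abs_le]
      constructor
      · linarith [h1.1]
      · have := h1.2
        have hw := w_succ J
        linarith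
    refine h2.trans (le_rpow_neg ?_)
    have h3 : θ * (J:ℝ) ≤ (J:ℝ) := by
      have h4 := hθJ_le_T
      rw [hTJ] at h4
      exact_mod_cast h4
    push_cast
    linarith

/-! ### The key inequality for `fmap` -/

lemma fmap_sub (hj : StrictMono j) (hθ : 1 ≤ θ) (y y' : ℝ) :
    fmap j θ α y - fmap j θ α y'
      = ∑' t : ℕ, (((dig y t : ℤ) : ℝ) - ((dig y' t : ℤ) : ℝ)) / 2^(pis j θ α t + 1) := by
  have h1 : fmap j θ α y - fmap j θ α y'
      = ∑' n : ℕ, (((aB j θ α y n : ℕ) : ℝ) - ((aB j θ α y' n : ℕ) : ℝ)) / 2^(n+1) := by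
    rw [fmap, fmap, ← Summable.tsum_sub (summable_aB y) (summable_aB y')]
    exact tsum_congr (fun n => by rw [sub_div])
  rw [h1]
  have hsupp : Function.support
      (fun n : ℕ => (((aB j θ α y n : ℕ) : ℝ) - ((aB j θ α y' n : ℕ) : ℝ)) / 2^(n+1))
      ⊆ Set.range (pis j θ α) := by
    intro n hn
    rcases Classical.em (FreeP j θ α n) with hfree | hfix
    · exact ⟨Fr j θ α n, pis_Fr hfree⟩
    · exfalso
      apply hn
      have he : aB j θ α y n = aB j θ α y' n := by
        rw [aB, aB, if_pos (not_not.mp hfix), if_pos (not_not.mp hfix)]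
      simp [he]
  have hinj := (pis_strictMono (α := α) hj hθ).injective
  have key := Function.Injective.tsum_eq hinj
    (f := fun n : ℕ => (((aB j θ α y n : ℕ) : ℝ) - ((aB j θ α y' n : ℕ) : ℝ)) / 2^(n+1)) hsupp
  rw [← key]
  refine tsum_congr (fun t => ?_)
  have e1 := aB_free (j := j) (θ := θ) (α := α) (pis_free hj hθ t) y
  have e2 := aB_free (j := j) (θ := θ) (α := α) (pis_free hj hθ t) y'
  simp only [e1, e2, Fr_pis hj hθ]

lemma dist_bound (hj : StrictMono j) (hθ : 1 ≤ θ) (hα0 : 0 < α) (hαθ : α * θ < 1)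
    {y y' : ℝ} (hy : y ∈ Ico (0:ℝ) 1) (hy' : y' ∈ Ico (0:ℝ) 1) :
    |y - y'| ≤ 4 * |fmap j θ α y - fmap j θ α y'| ^ α := by
  have hcvals : ∀ t : ℕ, (((dig y t : ℤ) : ℝ) - ((dig y' t : ℤ) : ℝ)) = 0
      ∨ (((dig y t : ℤ) : ℝ) - ((dig y' t : ℤ) : ℝ)) = 1
      ∨ (((dig y t : ℤ) : ℝ) - ((dig y' t : ℤ) : ℝ)) = -1 := by
    intro t
    have h1 := dig_nonneg y t; have h2 := dig_le_one y t
    have h3 := dig_nonneg y' t; have h4 := dig_le_one y' t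
    have e1 : dig y t = 0 ∨ dig y t = 1 := by omega
    have e2 : dig y' t = 0 ∨ dig y' t = 1 := by omega
    rcases e1 with e1 | e1 <;> rcases e2 with e2 | e2 <;> rw [e1, e2] <;> norm_num
  have hyy : y - y' = ∑' t : ℕ, (((dig y t : ℤ) : ℝ) - ((dig y' t : ℤ) : ℝ)) / 2^(t+1) := by
    have e := Summable.tsum_sub (summable_dig y) (summable_dig y')
    rw [tsum_dig hy, tsum_dig hy'] at e
    rw [← e]
    exact tsum_congr (fun t => (sub_div _ _ _).symm)
  have hff := fmap_sub (α := α) hj hθ y y'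
  rw [hyy, hff]
  exact core α hα0 (pis_strictMono hj hθ) (layout_core hj hθ hα0 hαθ) hcvals

/-! ### Lower bound -/

lemma lower_bound (d : ℕ) (hd : 1 ≤ d) (hθ : 1 ≤ θ) (hj : StrictMono j)
    (hα0 : 0 < α) (hαθ : α * θ < 1) :
    (d : ℝ≥0∞) * ENNReal.ofReal α ≤ dimH (atheta d θ j) := by
  set S : Set (Fin d → ℝ) := Set.pi univ (fun _ => Ico (0:ℝ) 1) with hS
  set Fd : (Fin d → ℝ) → (Fin d → ℝ) := fun y i => fmap j θ α (y i) with hFd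
  have hkey : ∀ y ∈ S, ∀ y' ∈ S, dist y y' ≤ 4 * dist (Fd y) (Fd y') ^ α := by
    intro y hy y' hy'
    have h0 : (0:ℝ) ≤ 4 * dist (Fd y) (Fd y') ^ α := by positivity
    rw [dist_pi_le_iff h0]
    intro i
    have h1 := dist_bound (j := j) hj hθ hα0 hαθ (hy i (mem_univ i)) (hy' i (mem_univ i))
    rw [Real.dist_eq]
    refine h1.trans ?_
    have h2 : |fmap j θ α (y i) - fmap j θ α (y' i)| ≤ dist (Fd y) (Fd y') := by
      rw [← Real.dist_eq]; exact dist_le_pi_dist (Fd y) (Fd y') i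
    have h3 := Real.rpow_le_rpow (abs_nonneg _) h2 hα0.le
    nlinarith
  have hinj : InjOn Fd S := by
    intro y hy y' hy' he
    have h1 := hkey y hy y' hy'
    rw [he, dist_self, Real.zero_rpow hα0.ne', mul_zero] at h1
    exact dist_le_zero.mp h1
  have hsub : Fd '' S ⊆ atheta d θ j := by
    rintro x ⟨y, hy, rfl⟩
    constructor
    · rw [Set.mem_Icc]
      constructor
      · intro i; exact (fmap_mem_Icc (y i)).1
      · intro i; exact (fmap_mem_Icc (y i)).2
    · intro P
      refine ⟨qs j θ α P, (qs_strictMono (j := j) (θ := θ) (α := α)).le_apply, ?_⟩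
      rw [dyadicBallUnion, mem_iUnion]
      choose k hk using fun i => exists_center (j := j) (θ := θ) (α := α) hj hθ (y i) P
      refine ⟨k, ?_⟩
      rw [Metric.mem_closedBall]
      have h0 : (0:ℝ) ≤ (2:ℝ)^(-(θ * ((j (qs j θ α P) : ℕ) : ℝ))) :=
        le_of_lt (Real.rpow_pos_of_pos (by norm_num) _)
      rw [dist_pi_le_iff h0]
      intro i
      rw [Real.dist_eq]
      exact hk i
  set g := Function.invFunOn Fd S with hg
  have hgim : g '' (Fd '' S) = S := hinj.invFunOn_image (subset_refl S)
  have hgF : ∀ y ∈ S, g (Fd y) = y := by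
    intro y hy
    have h1 : Fd (g (Fd y)) = Fd y := Function.invFunOn_eq ⟨y, hy, rfl⟩
    have h2 : g (Fd y) ∈ S := Function.invFunOn_mem ⟨y, hy, rfl⟩
    exact hinj h2 hy h1
  have hHolder : HolderOnWith (Real.toNNReal 4) (Real.toNNReal α) g (Fd '' S) := by
    rintro x ⟨y, hy, rfl⟩ x' ⟨y', hy', rfl⟩
    rw [hgF y hy, hgF y' hy', edist_dist, edist_dist]
    have h1 := hkey y hy y' hy'
    have hcoe : ((Real.toNNReal α : ℝ≥0) : ℝ) = α := Real.coe_toNNReal α hα0.le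
    calc ENNReal.ofReal (dist y y')
        ≤ ENNReal.ofReal (4 * dist (Fd y) (Fd y') ^ α) := ENNReal.ofReal_le_ofReal h1
      _ = ENNReal.ofReal 4 * ENNReal.ofReal (dist (Fd y) (Fd y') ^ α) :=
          ENNReal.ofReal_mul (by norm_num)
      _ = ENNReal.ofReal 4 * ENNReal.ofReal (dist (Fd y) (Fd y')) ^ α := by
          rw [ENNReal.ofReal_rpow_of_nonneg dist_nonneg hα0.le]
      _ = (Real.toNNReal 4 : ℝ≥0∞) * ENNReal.ofReal (dist (Fd y) (Fd y'))
            ^ ((Real.toNNReal α : ℝ≥0) : ℝ) := by rw [hcoe]; rfl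
  have hdimS : dimH S = d := by
    have hx : S ∈ 𝓝 (fun _ : Fin d => (1/2:ℝ)) := by
      refine mem_of_superset ((isOpen_set_pi finite_univ
        (fun i _ => isOpen_Ioo (a := (0:ℝ)) (b := 1))).mem_nhds ?_) ?_
      · intro i _; exact ⟨by norm_num, by norm_num⟩
      · exact Set.pi_mono (fun i _ => Ioo_subset_Ico_self)
    rw [Real.dimH_of_mem_nhds hx, Module.finrank_pi, Fintype.card_fin]
  have hrpos : 0 < Real.toNNReal α := Real.toNNReal_pos.mpr hα0
  have hchain := hHolder.dimH_image_le hrpos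
  rw [hgim, hdimS] at hchain
  have hmono : dimH (Fd '' S) ≤ dimH (atheta d θ j) := dimH_mono hsub
  have h1 : (d:ℝ≥0∞) * ((Real.toNNReal α : ℝ≥0) : ℝ≥0∞) ≤ dimH (Fd '' S) :=
    (ENNReal.le_div_iff_mul_le (Or.inl (by exact_mod_cast hrpos.ne'))
      (Or.inl ENNReal.coe_ne_top)).mp hchain
  calc (d : ℝ≥0∞) * ENNReal.ofReal α
      = (d:ℝ≥0∞) * ((Real.toNNReal α : ℝ≥0) : ℝ≥0∞) := rfl
    _ ≤ dimH (Fd '' S) := h1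
    _ ≤ _ := hmono

/-! ### Upper bound -/

lemma ediam_closedBall_le (x : Fin d' → ℝ) (ρ : ℝ) :
    EMetric.diam (Metric.closedBall x ρ) ≤ ENNReal.ofReal (2*ρ) := by
  refine EMetric.diam_le (fun a ha b hb => ?_)
  rw [Metric.mem_closedBall] at ha hb
  rw [edist_dist]
  refine ENNReal.ofReal_le_ofReal ?_
  calc dist a b ≤ dist a x + dist b x := dist_triangle_right a b x
    _ ≤ 2*ρ := by linarith

lemma upper_aux (d : ℕ) (hθ : 1 ≤ θ) (hj : StrictMono j)
    {s : ℝ≥0} (hs : (d:ℝ)/θ < (s:ℝ)) :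
    μH[(s:ℝ)] (atheta d θ j) = 0 := by
  classical
  have hθ0 : (0:ℝ) < θ := by linarith
  have hsθ : (d:ℝ) < (s:ℝ) * θ := by
    rw [div_lt_iff₀ hθ0] at hs; linarith
  set e : ℝ := (s:ℝ)*θ - (d:ℝ) with he
  have he0 : 0 < e := by rw [he]; linarith
  have hjge : ∀ p, p ≤ j p := fun p => hj.le_apply
  -- the coverings
  set t : ∀ P : ℕ, (Σ a : ℕ, (Fin d → Fin (2 ^ (j (P + a))))) → Set (Fin d → ℝ) :=
    fun P i => Metric.closedBall (fun l => ((i.2 l : ℝ) + 1/2) / 2 ^ (j (P + i.1)))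
      ((2:ℝ) ^ (-(θ * ((j (P + i.1)) : ℝ)))) with ht
  set r : ℕ → ℝ≥0∞ := fun P => ENNReal.ofReal (2 * (2:ℝ) ^ (-(θ * (P : ℝ)))) with hr
  have hrad : ∀ P (i : Σ a : ℕ, (Fin d → Fin (2 ^ (j (P + a))))),
      (2:ℝ) ^ (-(θ * ((j (P + i.1)) : ℝ))) ≤ (2:ℝ) ^ (-(θ * (P : ℝ))) := by
    intro P i
    refine Real.rpow_le_rpow_of_exponent_le one_le_two ?_
    have h1 : (P:ℝ) ≤ (j (P + i.1) : ℝ) := by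
      exact_mod_cast le_trans (Nat.le_add_right P i.1) (hjge (P + i.1))
    nlinarith
  have hdiam : ∀ P (i : Σ a : ℕ, (Fin d → Fin (2 ^ (j (P + a))))),
      EMetric.diam (t P i) ≤ r P := by
    intro P i
    refine le_trans (ediam_closedBall_le _ _) (ENNReal.ofReal_le_ofReal ?_)
    nlinarith [hrad P i]
  have hr0 : Filter.Tendsto r Filter.atTop (𝓝 0) := by
    have h1 : Filter.Tendsto (fun P : ℕ => 2 * (2:ℝ) ^ (-(θ * (P : ℝ)))) Filter.atTop (𝓝 0) := by
      have h2 : ∀ P : ℕ, 2 * (2:ℝ) ^ (-(θ * (P : ℝ))) ≤ 2 * ((1:ℝ)/2)^P := by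
        intro P
        have h3 : (2:ℝ) ^ (-(θ * (P : ℝ))) ≤ (2:ℝ) ^ (-(P:ℝ)) := by
          refine Real.rpow_le_rpow_of_exponent_le one_le_two ?_
          nlinarith [Nat.cast_nonneg (α := ℝ) P]
        have h4 : (2:ℝ) ^ (-(P:ℝ)) = ((1:ℝ)/2)^P := by
          rw [Real.rpow_neg (by norm_num), Real.rpow_natCast, one_div, inv_pow]
        nlinarith [h3, h4]
      have h5 : Filter.Tendsto (fun P : ℕ => 2 * ((1:ℝ)/2)^P) Filter.atTop (𝓝 0) := by
        have := tendsto_pow_atTop_nhds_zero_of_lt_one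
          (show (0:ℝ) ≤ 1/2 by norm_num) (show (1:ℝ)/2 < 1 by norm_num)
        simpa using this.const_mul 2
      refine tendsto_of_tendsto_of_tendsto_of_le_of_le tendsto_const_nhds h5
        (fun P => by positivity) h2
    have := ENNReal.tendsto_ofReal h1
    rwa [ENNReal.ofReal_zero] at this
  have hst : ∀ P : ℕ, atheta d θ j ⊆ ⋃ i, t P i := by
    intro P x hx
    obtain ⟨p, hPp, hball⟩ := hx.2 P
    obtain ⟨a, rfl⟩ : ∃ a, p = P + a := ⟨p - P, by omega⟩
    rw [dyadicBallUnion, mem_iUnion] at hball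
    obtain ⟨k, hk⟩ := hball
    rw [mem_iUnion]
    exact ⟨⟨a, k⟩, hk⟩
  have hle := MeasureTheory.Measure.hausdorffMeasure_le_liminf_tsum (s:ℝ) (atheta d θ j)
    r hr0 t (Filter.Eventually.of_forall hdiam) (Filter.Eventually.of_forall hst)
  -- now bound the sums
  set q : ℝ≥0∞ := ENNReal.ofReal ((2:ℝ)^(-e)) with hq
  have hq1 : q < 1 := by
    rw [hq]
    have : (2:ℝ)^(-e) < 1 := by
      refine Real.rpow_lt_one_of_one_lt_of_neg one_lt_two (by linarith)
    calc ENNReal.ofReal ((2:ℝ)^(-e)) < ENNReal.ofReal 1 :=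
          (ENNReal.ofReal_lt_ofReal_iff (by norm_num)).mpr this
      _ = 1 := ENNReal.ofReal_one
  set C : ℝ≥0∞ := ENNReal.ofReal ((2:ℝ)^(s:ℝ)) * (1-q)⁻¹ with hC
  have hCtop : C ≠ ⊤ := by
    rw [hC]
    refine ENNReal.mul_ne_top ENNReal.ofReal_ne_top ?_
    refine ENNReal.inv_ne_top.mpr ?_
    simp only [ne_eq, tsub_eq_zero_iff_le, not_le]
    exact hq1
  have hterm : ∀ P : ℕ, (∑' i : (Σ a : ℕ, (Fin d → Fin (2 ^ (j (P + a))))),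
      EMetric.diam (t P i) ^ (s:ℝ)) ≤ C * q ^ P := by
    intro P
    have hb1 : ∀ i : (Σ a : ℕ, (Fin d → Fin (2 ^ (j (P + a))))),
        EMetric.diam (t P i) ^ (s:ℝ)
          ≤ ENNReal.ofReal ((2 * (2:ℝ) ^ (-(θ * ((j (P + i.1)) : ℝ))))^(s:ℝ)) := by
      intro i
      have h1 : EMetric.diam (t P i)
          ≤ ENNReal.ofReal (2 * (2:ℝ) ^ (-(θ * ((j (P + i.1)) : ℝ)))) :=
        ediam_closedBall_le _ _
      calc EMetric.diam (t P i) ^ (s:ℝ)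
          ≤ (ENNReal.ofReal (2 * (2:ℝ) ^ (-(θ * ((j (P + i.1)) : ℝ))))) ^ (s:ℝ) :=
            ENNReal.rpow_le_rpow h1 s.2
        _ = ENNReal.ofReal ((2 * (2:ℝ) ^ (-(θ * ((j (P + i.1)) : ℝ))))^(s:ℝ)) :=
            ENNReal.ofReal_rpow_of_nonneg (by positivity) s.2
    calc (∑' i : (Σ a : ℕ, (Fin d → Fin (2 ^ (j (P + a))))), EMetric.diam (t P i) ^ (s:ℝ))
        ≤ ∑' i : (Σ a : ℕ, (Fin d → Fin (2 ^ (j (P + a))))),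
            ENNReal.ofReal ((2 * (2:ℝ) ^ (-(θ * ((j (P + i.1)) : ℝ))))^(s:ℝ)) :=
          ENNReal.tsum_le_tsum hb1
      _ = ∑' a : ℕ, ∑' _k : (Fin d → Fin (2 ^ (j (P + a)))),
            ENNReal.ofReal ((2 * (2:ℝ) ^ (-(θ * ((j (P + a)) : ℝ))))^(s:ℝ)) :=
          ENNReal.tsum_sigma' _
      _ = ∑' a : ℕ, (Fintype.card (Fin d → Fin (2 ^ (j (P + a))))) *
            ENNReal.ofReal ((2 * (2:ℝ) ^ (-(θ * ((j (P + a)) : ℝ))))^(s:ℝ)) := by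
          refine tsum_congr (fun a => ?_)
          rw [tsum_fintype]
          rw [Finset.sum_const, Finset.card_univ, nsmul_eq_mul]
      _ ≤ ∑' a : ℕ, ENNReal.ofReal ((2:ℝ)^(s:ℝ)) * q ^ (P + a) := by
          refine ENNReal.tsum_le_tsum (fun a => ?_)
          rw [Fintype.card_fun, Fintype.card_fin, Fintype.card_fin]
          -- goal: (((2^(j (P+a)))^d : ℕ) : ℝ≥0∞) * ofReal (...) ≤ ofReal(2^s) * q^(P+a)
          have hcard : (((2 ^ (j (P + a)))^d : ℕ) : ℝ≥0∞)
              = ENNReal.ofReal (((2:ℝ) ^ (j (P + a)))^d) := by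
            rw [← ENNReal.ofReal_natCast]
            congr 1
            push_cast
            ring
          rw [hcard, ← ENNReal.ofReal_mul (by positivity)]
          rw [hq, ← ENNReal.ofReal_pow (by positivity), ← ENNReal.ofReal_mul (by positivity)]
          refine ENNReal.ofReal_le_ofReal ?_
          -- real inequality
          set jp := j (P + a) with hjp
          have hjpge : (P:ℝ) + (a:ℝ) ≤ (jp:ℝ) := by
            exact_mod_cast hjge (P + a)
          have hx2 : (0:ℝ) < 2 := by norm_num
          have hrw1 : (2 * (2:ℝ) ^ (-(θ * (jp : ℝ))))^(s:ℝ)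
              = (2:ℝ)^(s:ℝ) * (2:ℝ) ^ (-(θ * (jp : ℝ)) * (s:ℝ)) := by
            rw [Real.mul_rpow (by norm_num) (by positivity), ← Real.rpow_mul (by norm_num)]
          have hrw2 : ((2:ℝ) ^ jp)^d = (2:ℝ) ^ ((jp:ℝ) * (d:ℝ)) := by
            rw [← Real.rpow_natCast ((2:ℝ)^(jp:ℕ)) d, ← Real.rpow_natCast 2 jp,
              ← Real.rpow_mul (by norm_num)]
          have hrw3 : ((2:ℝ)^(-e))^(P+a) = (2:ℝ)^(-e * ((P:ℝ)+(a:ℝ))) := by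
            rw [← Real.rpow_natCast ((2:ℝ)^(-e)) (P+a), ← Real.rpow_mul (by norm_num)]
            congr 1
            push_cast
            ring
          rw [hrw1, hrw2, hrw3]
          calc (2:ℝ) ^ ((jp:ℝ) * (d:ℝ)) * ((2:ℝ)^(s:ℝ) * (2:ℝ) ^ (-(θ * (jp : ℝ)) * (s:ℝ)))
              = (2:ℝ)^(s:ℝ) * (2:ℝ) ^ ((jp:ℝ) * (d:ℝ) + (-(θ * (jp : ℝ)) * (s:ℝ))) := by
                rw [Real.rpow_add hx2]; ring
            _ ≤ (2:ℝ)^(s:ℝ) * (2:ℝ) ^ (-e * ((P:ℝ)+(a:ℝ))) := by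
                refine mul_le_mul_of_nonneg_left ?_ (by positivity)
                refine Real.rpow_le_rpow_of_exponent_le one_le_two ?_
                have : (jp:ℝ) * (d:ℝ) + (-(θ * (jp : ℝ)) * (s:ℝ)) = -e * (jp:ℝ) := by
                  rw [he]; ring
                rw [this]
                nlinarith
      _ = ENNReal.ofReal ((2:ℝ)^(s:ℝ)) * q ^ P * ∑' a : ℕ, q ^ a := by
          rw [← ENNReal.tsum_mul_left]
          refine tsum_congr (fun a => ?_)
          rw [pow_add]
          ring
      _ = C * q ^ P := by
          rw [hC, ENNReal.tsum_geometric]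
          ring
  have hB0 : Filter.Tendsto (fun P : ℕ => C * q ^ P) Filter.atTop (𝓝 0) := by
    have h1 := ENNReal.tendsto_pow_atTop_nhds_zero_of_lt_one hq1
    have h2 := ENNReal.Tendsto.const_mul h1 (Or.inr hCtop)
    simpa using h2
  have hlim : Filter.liminf (fun P : ℕ => (∑' i : (Σ a : ℕ, (Fin d → Fin (2 ^ (j (P + a))))),
      EMetric.diam (t P i) ^ (s:ℝ))) Filter.atTop = 0 := by
    refine le_antisymm ?_ zero_le
    calc Filter.liminf (fun P : ℕ => (∑' i : (Σ a : ℕ, (Fin d → Fin (2 ^ (j (P + a))))),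
        EMetric.diam (t P i) ^ (s:ℝ))) Filter.atTop
        ≤ Filter.liminf (fun P : ℕ => C * q ^ P) Filter.atTop :=
          Filter.liminf_le_liminf (Filter.Eventually.of_forall hterm)
      _ = 0 := hB0.liminf_eq
  have hle := hle.trans_eq hlim
  exact le_antisymm hle zero_le

lemma upper_bound (d : ℕ) (hd : 1 ≤ d) (hθ : 1 ≤ θ) (hj : StrictMono j) :
    dimH (atheta d θ j) ≤ ENNReal.ofReal ((d:ℝ)/θ) := by
  by_contra hcon
  push_neg at hcon
  obtain ⟨s, hs1, hs2⟩ := ENNReal.lt_iff_exists_nnreal_btwn.mp hcon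
  have hθ0 : (0:ℝ) < θ := by linarith
  have hdθ : (0:ℝ) < (d:ℝ)/θ := by
    have : (0:ℝ) < (d:ℝ) := by exact_mod_cast hd
    positivity
  have hs0 : (0:ℝ) < (s:ℝ) := by
    by_contra hs0
    push_neg at hs0
    have : (s : ℝ≥0∞) = 0 := by
      have : s = 0 := by exact_mod_cast le_antisymm hs0 s.2
      simp [this]
    rw [this] at hs1
    exact absurd hs1 (by simp)
  have hlt : (d:ℝ)/θ < (s:ℝ) := by
    have := hs1
    rw [← ENNReal.ofReal_coe_nnreal] at this
    exact (ENNReal.ofReal_lt_ofReal_iff hs0).mp this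
  have h0 := upper_aux (θ := θ) (j := j) d hθ hj hlt
  have hle : dimH (atheta d θ j) ≤ (s : ℝ≥0∞) :=
    dimH_le_of_hausdorffMeasure_ne_top (by rw [h0]; exact ENNReal.zero_ne_top)
  exact absurd (lt_of_lt_of_le hs2 hle) (lt_irrefl _)

end S13

/-- For `θ ≥ 1` and any strictly increasing sequence `(j_p)` of positive
integers, `dim_H A_θ = d/θ`. -/
theorem dimH_atheta_eq (d : ℕ) (hd : 1 ≤ d) (θ : ℝ) (hθ : 1 ≤ θ)
    (j : ℕ → ℕ) (hj : StrictMono j) (hj1 : ∀ p, 1 ≤ j p) :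
    dimH (atheta d θ j) = ENNReal.ofReal ((d : ℝ) / θ) := by
  have hθ0 : (0:ℝ) < θ := by linarith
  have hd0 : (0:ℝ) < (d:ℝ) := by exact_mod_cast hd
  refine le_antisymm (S13.upper_bound d hd hθ hj) ?_
  refine le_of_forall_lt (fun c hc => ?_)
  obtain ⟨x, hx0, hx1, hx2⟩ := ENNReal.lt_iff_exists_real_btwn.mp hc
  have hxlt : x < (d:ℝ)/θ := by
    rw [ENNReal.ofReal_lt_ofReal_iff (by positivity)] at hx2
    exact hx2
  set x' := max x 0 with hx'
  have hx'0 : 0 ≤ x' := le_max_right x 0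
  have hx'lt : x' < (d:ℝ)/θ := by
    rw [hx']; exact max_lt hxlt (by positivity)
  set α := (x'/(d:ℝ) + 1/θ)/2 with hα
  have hfrac : x'/(d:ℝ) < 1/θ := by
    rw [div_lt_div_iff₀ hd0 hθ0]
    have := (lt_div_iff₀ hθ0).mp hx'lt
    linarith
  have h1θ : (0:ℝ) < 1/θ := div_pos one_pos hθ0
  have hα0 : 0 < α := by
    rw [hα]
    have := div_nonneg hx'0 hd0.le
    linarith
  have hαθ : α * θ < 1 := by
    have hαlt : α < 1/θ := by rw [hα]; linarith [hfrac]
    calc α * θ < (1/θ) * θ := by nlinarith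
      _ = 1 := by field_simp
  have hlow := S13.lower_bound (θ := θ) (j := j) (α := α) d hd hθ hj hα0 hαθ
  have hxdα : x ≤ (d:ℝ) * α := by
    have h2 : (d:ℝ) * α = (x' + (d:ℝ)/θ)/2 := by
      rw [hα]; field_simp
    have h1 : x' ≤ (d:ℝ) * α := by rw [h2]; linarith [hx'lt]
    linarith [le_max_left x 0]
  calc c < ENNReal.ofReal x := hx1
    _ ≤ ENNReal.ofReal ((d:ℝ) * α) := ENNReal.ofReal_le_ofReal hxdα
    _ = (d : ℝ≥0∞) * ENNReal.ofReal α := by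
        rw [ENNReal.ofReal_mul hd0.le, ENNReal.ofReal_natCast]
    _ ≤ dimH (atheta d θ j) := hlow
end
end
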